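/- arXiv:1404.0139 — 4 statements merged into one kernel-verified Lean document; each statement's English description precedes it below -/
import Mathlib

section
/- Along any solution X of the discrete Keller–Segel particle system on [0,T), the second moment Π²(t) = ∑_{i=1}^N X_i(t)² satisfies the exact identity (1/2) d/dt Π²(t) = (N−1)(1 − χ h_N N) for every t ∈ [0,T). -/
open Filter

noncomputable section

/-- `h_N = 1/(N+1)`. -/
def hN (N : ℕ) : ℝ := 1 / (N + 1)

/-- Right-hand side of the discrete Keller–Segel particle ODE, with the convention that
the boundary terms `1/(X_1 - X_0)` and `1/(X_{N+1} - X_N)` are set to zero. -/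
def ksRHS (N : ℕ) (χ : ℝ) (x : ℕ → ℝ) (i : ℕ) : ℝ :=
  (if i < N then -(1 / (x (i + 1) - x i)) else 0)
    + (if 1 < i then 1 / (x i - x (i - 1)) else 0)
    + 2 * χ * hN N * ∑ j ∈ (Finset.Icc 1 N).erase i, 1 / (x j - x i)

/-- A solution of the discrete Keller–Segel particle system on `[0,T)`. -/
structure IsKSSol (N : ℕ) (χ T : ℝ) (X : ℕ → ℝ → ℝ) : Prop where
  ordered : ∀ t ∈ Set.Ico (0 : ℝ) T, ∀ i, 1 ≤ i → i < N → X i t < X (i + 1) t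
  ode : ∀ i ∈ Finset.Icc 1 N, ∀ t ∈ Set.Ico (0 : ℝ) T,
    HasDerivAt (X i) (ksRHS N χ (fun j => X j t) i) t

/-- A solution on its maximal interval of existence `[0,T)`: it cannot be extended to a
solution on any larger interval `[0,T')`. -/
def IsMaxKSSol (N : ℕ) (χ T : ℝ) (X : ℕ → ℝ → ℝ) : Prop :=
  IsKSSol N χ T X ∧
    ∀ T' > T, ∀ X' : ℕ → ℝ → ℝ,
      (∀ i ∈ Finset.Icc 1 N, ∀ t ∈ Set.Ico (0 : ℝ) T, X' i t = X i t) →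
        ¬ IsKSSol N χ T' X'

/-- `liminf_{t → T⁻} (X_{i+1}(t) - X_i(t)) = 0`. -/
def gapLiminfZero (X : ℕ → ℝ → ℝ) (T : ℝ) (i : ℕ) : Prop :=
  Filter.liminf (fun t => X (i + 1) t - X i t) (nhdsWithin T (Set.Iio T)) = 0

/-- A nonempty set of consecutive indices in `{1,…,N}` all of whose consecutive gaps have
liminf zero at time `T`. -/
def IsWeakCand (N : ℕ) (X : ℕ → ℝ → ℝ) (T : ℝ) (I : Finset ℕ) : Prop :=
  I.Nonempty ∧ (∃ a b, 1 ≤ a ∧ b ≤ N ∧ I = Finset.Icc a b) ∧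
    ∀ i, i ∈ I → i + 1 ∈ I → gapLiminfZero X T i

/-- A weak blow-up set: maximal for inclusion among weak candidates. -/
def IsWeakBlowup (N : ℕ) (X : ℕ → ℝ → ℝ) (T : ℝ) (I : Finset ℕ) : Prop :=
  IsWeakCand N X T I ∧ ∀ J, IsWeakCand N X T J → I ⊆ J → J = I

/-- A strong blow-up set: all consecutive gaps tend to zero, and the particles of `I` stay
uniformly away from the particles outside `I`. -/
def IsStrongBlowup (N : ℕ) (X : ℕ → ℝ → ℝ) (T : ℝ) (I : Finset ℕ) : Prop :=
  IsWeakBlowup N X T I ∧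
    (∀ i, i ∈ I → i + 1 ∈ I →
      Filter.Tendsto (fun t => X (i + 1) t - X i t) (nhdsWithin T (Set.Iio T)) (nhds 0)) ∧
    ∃ c > 0, ∀ i ∈ I, ∀ j ∈ Finset.Icc 1 N, j ∉ I → ∀ t ∈ Set.Ico (0 : ℝ) T,
      1 / c ≤ |X i t - X j t|

/-- Mean of the configuration `x` over the index set `I`. -/
def meanOn (I : Finset ℕ) (x : ℕ → ℝ) : ℝ := (∑ i ∈ I, x i) / (I.card : ℝ)

/-- Variance `Π²_I` of the configuration `x` over the index set `I`. -/
def var2 (I : Finset ℕ) (x : ℕ → ℝ) : ℝ := ∑ i ∈ I, (x i - meanOn I x) ^ 2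

/-- Exterior interaction potential `H_{IO,m} = ∑_{j∈O} ∑_{i∈I} 1/(x_j - x_i)^m`,
where `O = {1,…,N} \ I`. -/
def extPot (N : ℕ) (I : Finset ℕ) (m : ℕ) (x : ℕ → ℝ) : ℝ :=
  ∑ j ∈ (Finset.Icc 1 N) \ I, ∑ i ∈ I, 1 / (x j - x i) ^ m


lemma pair_sum {a b : ℝ} (h : a ≠ b) : a / (b - a) + b / (a - b) = -1 := by
  have h1 : b - a ≠ 0 := sub_ne_zero.mpr (Ne.symm h)
  have h2 : a - b ≠ 0 := sub_ne_zero.mpr h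
  field_simp
  ring

lemma mono_lemma (N : ℕ) (x : ℕ → ℝ) (hx : ∀ i, 1 ≤ i → i < N → x i < x (i + 1)) :
    ∀ b a, 1 ≤ a → a < b → b ≤ N → x a < x b := by
  intro b
  induction b with
  | zero => intro a _ h _; omega
  | succ b ih =>
    intro a ha hab hbN
    have hb1 : 1 ≤ b := by omega
    have hbN' : b < N := by omega
    rcases Nat.lt_or_ge a b with h | h
    · exact (ih a ha h (by omega)).trans (hx b hb1 hbN')
    · have : a = b := by omega
      subst this; exact hx a ha hbN'

lemma key (N : ℕ) (hN2 : 2 ≤ N) (χ : ℝ) (x : ℕ → ℝ)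
    (hx : ∀ i, 1 ≤ i → i < N → x i < x (i + 1)) :
    ∑ i ∈ Finset.Icc 1 N, x i * ksRHS N χ x i
      = ((N : ℝ) - 1) * (1 - χ * hN N * N) := by
  have hN1 : (1:ℕ) ≤ N := by omega
  have hne : ∀ i ∈ Finset.Icc 1 N, ∀ j ∈ Finset.Icc 1 N, i ≠ j → x i ≠ x j := by
    intro i hi j hj hij
    simp only [Finset.mem_Icc] at hi hj
    rcases Nat.lt_or_ge i j with h | h
    · exact ne_of_lt (mono_lemma N x hx j i hi.1 h hj.2)
    · have h' : j < i := by omega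
      exact (ne_of_lt (mono_lemma N x hx i j hj.1 h' hi.2)).symm
  have hgapne : ∀ i, 1 ≤ i → i < N → x (i+1) - x i ≠ 0 := fun i h1 h2 =>
    sub_ne_zero.mpr (ne_of_gt (hx i h1 h2))
  simp only [ksRHS, mul_add]
  rw [Finset.sum_add_distrib, Finset.sum_add_distrib]
  -- Part A
  have eA : ∑ i ∈ Finset.Icc 1 N, x i * (if i < N then -(1 / (x (i+1) - x i)) else 0)
      = ∑ i ∈ Finset.Icc 1 (N-1), -(x i / (x (i+1) - x i)) := by
    have h1 : ∀ i ∈ Finset.Icc 1 N, x i * (if i < N then -(1 / (x (i+1) - x i)) else 0)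
        = (if i < N then -(x i / (x (i+1) - x i)) else 0) := by
      intro i _; split <;> simp [mul_one_div, div_eq_mul_inv]
    rw [Finset.sum_congr rfl h1, ← Finset.sum_filter]
    apply Finset.sum_congr _ (fun _ _ => rfl)
    ext i
    simp only [Finset.mem_filter, Finset.mem_Icc]
    omega
  -- Part B
  have eB : ∑ i ∈ Finset.Icc 1 N, x i * (if 1 < i then 1 / (x i - x (i-1)) else 0)
      = ∑ i ∈ Finset.Icc 1 (N-1), x (i+1) / (x (i+1) - x i) := by
    have h1 : ∀ i ∈ Finset.Icc 1 N, x i * (if 1 < i then 1 / (x i - x (i-1)) else 0)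
        = (if 1 < i then x i / (x i - x (i-1)) else 0) := by
      intro i _; split <;> simp [mul_one_div, div_eq_mul_inv]
    rw [Finset.sum_congr rfl h1, ← Finset.sum_filter]
    have h2 : (Finset.Icc 1 N).filter (fun i => 1 < i) = Finset.Icc 2 N := by
      ext i
      simp only [Finset.mem_filter, Finset.mem_Icc]
      omega
    rw [h2]
    apply Finset.sum_nbij' (fun i => i - 1) (fun i => i + 1)
    · intro a ha; simp only [Finset.mem_Icc] at *; omega
    · intro a ha; simp only [Finset.mem_Icc] at *; omega
    · intro a ha; simp only [Finset.mem_Icc] at ha; omega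
    · intro a ha; simp only [Finset.mem_Icc] at ha; omega
    · intro a ha
      simp only [Finset.mem_Icc] at ha
      have : a - 1 + 1 = a := by omega
      rw [this]
  have eAB : (∑ i ∈ Finset.Icc 1 N, x i * (if i < N then -(1 / (x (i+1) - x i)) else 0))
      + (∑ i ∈ Finset.Icc 1 N, x i * (if 1 < i then 1 / (x i - x (i-1)) else 0))
      = (N : ℝ) - 1 := by
    rw [eA, eB, ← Finset.sum_add_distrib]
    have h1 : ∀ i ∈ Finset.Icc 1 (N-1),
        -(x i / (x (i+1) - x i)) + x (i+1) / (x (i+1) - x i) = 1 := by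
      intro i hi
      simp only [Finset.mem_Icc] at hi
      have hd := hgapne i hi.1 (by omega)
      field_simp; ring
    rw [Finset.sum_congr rfl h1, Finset.sum_const, Nat.card_Icc]
    have : N - 1 + 1 - 1 = N - 1 := by omega
    rw [this, nsmul_eq_mul, mul_one, Nat.cast_sub hN1, Nat.cast_one]
  rw [eAB]
  -- Part C
  set I := Finset.Icc 1 N with hI
  have eC : ∑ i ∈ I, x i * (2 * χ * hN N * ∑ j ∈ I.erase i, 1 / (x j - x i))
      = 2 * χ * hN N * ∑ i ∈ I, ∑ j ∈ I.erase i, x i / (x j - x i) := by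
    rw [Finset.mul_sum]
    refine Finset.sum_congr rfl fun i _ => ?_
    rw [mul_left_comm, Finset.mul_sum]
    congr 1
    exact Finset.sum_congr rfl fun j _ => mul_one_div _ _
  rw [eC]
  have hswap : ∑ i ∈ I, ∑ j ∈ I.erase i, x i / (x j - x i)
      = ∑ i ∈ I, ∑ j ∈ I.erase i, x j / (x i - x j) := by
    rw [Finset.sum_comm' (s' := fun j => I.erase j) (t' := I)]
    intro i j
    simp only [Finset.mem_erase]
    tauto
  have hS : (∑ i ∈ I, ∑ j ∈ I.erase i, x i / (x j - x i)) * 2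
      = -((N:ℝ) * ((N:ℝ) - 1)) := by
    rw [mul_two]
    nth_rewrite 2 [hswap]
    rw [← Finset.sum_add_distrib]
    have h1 : ∀ i ∈ I, (∑ j ∈ I.erase i, x i / (x j - x i))
        + (∑ j ∈ I.erase i, x j / (x i - x j)) = -((N:ℝ) - 1) := by
      intro i hi
      rw [← Finset.sum_add_distrib]
      have h2 : ∀ j ∈ I.erase i, x i / (x j - x i) + x j / (x i - x j) = -1 := by
        intro j hj
        rw [Finset.mem_erase] at hj
        exact pair_sum (hne i hi j hj.2 (Ne.symm hj.1))
      rw [Finset.sum_congr rfl h2, Finset.sum_const,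
        Finset.card_erase_of_mem hi, hI, Nat.card_Icc]
      have : N + 1 - 1 - 1 = N - 1 := by omega
      rw [this, nsmul_eq_mul, Nat.cast_sub hN1, Nat.cast_one]
      ring
    rw [Finset.sum_congr rfl h1, Finset.sum_const, hI, Nat.card_Icc]
    have : N + 1 - 1 = N := by omega
    rw [this, nsmul_eq_mul]
    ring
  unfold hN
  unfold hN at hS
  linear_combination (χ * (1 / ((N:ℝ) + 1))) * hS

/-- along any solution, the second moment `Π²(t) = ∑_{i=1}^N X_i(t)²` satisfies
`(1/2) d/dt Π²(t) = (N-1)(1 - χ h_N N)` for every `t ∈ [0,T)`. -/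
theorem stmt1 (N : ℕ) (hN2 : 2 ≤ N) (χ T : ℝ) (hχ : 0 < χ)
    (X : ℕ → ℝ → ℝ) (hX : IsKSSol N χ T X)
    (t : ℝ) (ht : t ∈ Set.Ico (0 : ℝ) T) :
    HasDerivAt (fun s => (1 / 2) * ∑ i ∈ Finset.Icc 1 N, (X i s) ^ 2)
      (((N : ℝ) - 1) * (1 - χ * hN N * N)) t := by
  have hd : HasDerivAt (fun s => ∑ i ∈ Finset.Icc 1 N, (X i s) ^ 2)
      (∑ i ∈ Finset.Icc 1 N, 2 * X i t * ksRHS N χ (fun j => X j t) i) t := by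
    apply HasDerivAt.fun_sum
    intro i hi
    have h := (hX.ode i hi t ht).pow 2
    norm_num at h
    exact h
  have hkey := key N hN2 χ (fun j => X j t) (fun i h1 h2 => hX.ordered t ht i h1 h2)
  have hd2 := hd.const_mul (1/2 : ℝ)
  have heq : (1/2 : ℝ) * ∑ i ∈ Finset.Icc 1 N, 2 * X i t * ksRHS N χ (fun j => X j t) i
      = ((N : ℝ) - 1) * (1 - χ * hN N * N) := by
    rw [← hkey, Finset.mul_sum]
    exact Finset.sum_congr rfl fun i _ => by ring
  rw [heq] at hd2
  exact hd2
end
end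

section
/- Discrete logarithmic Hardy–Littlewood–Sobolev inequality: for every integer p ≥ 2 and all real numbers x_1 < x_2 < ⋯ < x_p, one has −∑_{i=1}^{p−1} log(x_{i+1}−x_i) + (1/p) ∑_{1≤i≠j≤p} log|x_i−x_j| ≥ 0. -/
open Filter

noncomputable section

/-- discrete logarithmic Hardy–Littlewood–Sobolev inequality: for every
integer `p ≥ 2` and all reals `x_1 < x_2 < ⋯ < x_p`,
`-∑_{i=1}^{p-1} log(x_{i+1}-x_i) + (1/p) ∑_{1≤i≠j≤p} log|x_i-x_j| ≥ 0`. -/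
theorem stmt3 (p : ℕ) (hp : 2 ≤ p) (x : ℕ → ℝ)
    (hx : ∀ i, 1 ≤ i → i < p → x i < x (i + 1)) :
    0 ≤ -∑ i ∈ Finset.Icc 1 (p - 1), Real.log (x (i + 1) - x i)
        + (1 / (p : ℝ)) *
          ∑ i ∈ Finset.Icc 1 p, ∑ j ∈ (Finset.Icc 1 p).erase i, Real.log |x i - x j| := by
  set L : ℕ → ℝ := fun k => Real.log (x (k + 1) - x k) with hL
  have mono : ∀ i j, 1 ≤ i → i < j → j ≤ p → x i < x j := by
    intro i j h1 hij hjp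
    induction j with
    | zero => omega
    | succ n ih =>
      rcases Nat.lt_succ_iff_lt_or_eq.mp hij with h | h
      · exact lt_trans (ih h (by omega)) (hx n (by omega) (by omega))
      · subst h; exact hx i h1 (by omega)
  have mono' : ∀ i j, 1 ≤ i → i ≤ j → j ≤ p → x i ≤ x j := by
    intro i j h1 h2 h3
    rcases h2.lt_or_eq with h | h
    · exact (mono i j h1 h h3).le
    · exact le_of_eq (congrArg x h)
  have bound : ∀ i ∈ Finset.Icc 1 p, ∀ j ∈ (Finset.Icc 1 p).erase i,
      (if j < i then L (i - 1) else L i) ≤ Real.log |x i - x j| := by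
    intro i hi j hj
    simp only [Finset.mem_Icc] at hi
    simp only [Finset.mem_erase, Finset.mem_Icc] at hj
    by_cases h : j < i
    · rw [if_pos h]
      have hi2 : 2 ≤ i := by omega
      have e : i - 1 + 1 = i := by omega
      have h1 : 0 < x i - x (i - 1) := by
        have := hx (i - 1) (by omega) (by omega)
        rw [e] at this; linarith
      have h2 : x j ≤ x (i - 1) := mono' j (i - 1) (by omega) (by omega) (by omega)
      have h3 : x i - x (i - 1) ≤ |x i - x j| := by
        rw [abs_of_pos (by linarith)]; linarith
      simp only [hL, e]
      exact Real.log_le_log h1 h3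
    · rw [if_neg h]
      have hji : i < j := by omega
      have h1 : 0 < x (i + 1) - x i := sub_pos.mpr (hx i (by omega) (by omega))
      have h2 : x (i + 1) ≤ x j := mono' (i + 1) j (by omega) (by omega) (by omega)
      have h3 : x (i + 1) - x i ≤ |x i - x j| := by
        rw [abs_sub_comm, abs_of_pos (by linarith [mono i j (by omega) hji (by omega)])]
        linarith
      exact Real.log_le_log h1 h3
  have step1 : ∀ i ∈ Finset.Icc 1 p,
      ((i - 1 : ℕ) • L (i - 1) + (p - i : ℕ) • L i)
        ≤ ∑ j ∈ (Finset.Icc 1 p).erase i, Real.log |x i - x j| := by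
    intro i hi
    have hi' := hi
    simp only [Finset.mem_Icc] at hi'
    have hsplit : (Finset.Icc 1 p).erase i = Finset.Icc 1 (i - 1) ∪ Finset.Icc (i + 1) p := by
      ext j
      simp only [Finset.mem_erase, Finset.mem_Icc, Finset.mem_union]
      omega
    have hdisj : Disjoint (Finset.Icc 1 (i - 1)) (Finset.Icc (i + 1) p) := by
      rw [Finset.disjoint_left]
      intro a ha hb
      simp only [Finset.mem_Icc] at ha hb
      omega
    have heq : ∑ j ∈ (Finset.Icc 1 p).erase i, (if j < i then L (i - 1) else L i)
        = (i - 1 : ℕ) • L (i - 1) + (p - i : ℕ) • L i := by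
      rw [hsplit, Finset.sum_union hdisj]
      rw [Finset.sum_congr rfl (fun j hj => if_pos (by
        simp only [Finset.mem_Icc] at hj; omega))]
      rw [Finset.sum_congr rfl (fun j hj => if_neg (by
        simp only [Finset.mem_Icc] at hj; omega))]
      rw [Finset.sum_const, Finset.sum_const, Nat.card_Icc, Nat.card_Icc]
      congr 2 <;> omega
    rw [← heq]
    exact Finset.sum_le_sum (bound i hi)
  -- the combinatorial identity
  have aux1 : ∑ i ∈ Finset.Icc 1 p, (i - 1 : ℕ) • L (i - 1)
      = ∑ k ∈ Finset.Icc 1 (p - 1), k • L k := by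
    have : Finset.Icc 1 p = Finset.map (addRightEmbedding 1) (Finset.Icc 0 (p - 1)) := by
      rw [Finset.map_add_right_Icc]
      congr 1 <;> omega
    rw [this, Finset.sum_map]
    have h0 : Finset.Icc 0 (p - 1) = insert 0 (Finset.Icc 1 (p - 1)) := by
      ext a; simp only [Finset.mem_Icc, Finset.mem_insert]; omega
    rw [h0, Finset.sum_insert (by simp)]
    simp only [addRightEmbedding_apply, Nat.add_sub_cancel]
    simp
  have aux2 : ∑ i ∈ Finset.Icc 1 p, (p - i : ℕ) • L i
      = ∑ i ∈ Finset.Icc 1 (p - 1), (p - i : ℕ) • L i := by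
    have h0 : Finset.Icc 1 p = insert p (Finset.Icc 1 (p - 1)) := by
      ext a; simp only [Finset.mem_Icc, Finset.mem_insert]; omega
    rw [h0, Finset.sum_insert (by simp only [Finset.mem_Icc]; omega)]
    simp
  have hid : ∑ i ∈ Finset.Icc 1 p, ((i - 1 : ℕ) • L (i - 1) + (p - i : ℕ) • L i)
      = (p : ℝ) * ∑ k ∈ Finset.Icc 1 (p - 1), L k := by
    rw [Finset.sum_add_distrib, aux1, aux2, ← Finset.sum_add_distrib]
    have : ∀ k ∈ Finset.Icc 1 (p - 1), k • L k + (p - k : ℕ) • L k = p • L k := by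
      intro k hk
      simp only [Finset.mem_Icc] at hk
      rw [← add_smul]
      congr 1
      omega
    rw [Finset.sum_congr rfl this, ← Finset.smul_sum, nsmul_eq_mul]
  have hB : (p : ℝ) * ∑ k ∈ Finset.Icc 1 (p - 1), L k
      ≤ ∑ i ∈ Finset.Icc 1 p, ∑ j ∈ (Finset.Icc 1 p).erase i, Real.log |x i - x j| := by
    rw [← hid]
    exact Finset.sum_le_sum step1
  have hp0 : (0 : ℝ) < p := by exact_mod_cast (show 0 < p by omega)
  have h2 := mul_le_mul_of_nonneg_left hB (le_of_lt (one_div_pos.mpr hp0))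
  have h3 : (1 / (p : ℝ)) * ((p : ℝ) * ∑ k ∈ Finset.Icc 1 (p - 1), L k)
      = ∑ k ∈ Finset.Icc 1 (p - 1), L k := by
    field_simp
  linarith
end
end

section
/- Let X be a solution of the discrete Keller–Segel particle system on [0,T), and let I ⊆ {1,…,N} be a set of consecutive indices with complement O. Then for every t ∈ [0,T): d/dt H_{IO,2}(t) ≤ (12 + 14χ + 4N^{1/4}) · H_{IO,4}(t). Consequently, since H_{IO,4} ≤ H_{IO,2}², one has d/dt H_{IO,2}(t) ≤ C(N,χ) · H_{IO,2}(t)² with C(N,χ) = 12 + 14χ + 4N^{1/4}. -/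
open Filter

noncomputable section

private lemma sum_pair_swap (s : Finset ℕ) (F : ℕ → ℕ → ℝ) :
    ∑ i ∈ s, ∑ l ∈ s.erase i, F i l = ∑ i ∈ s, ∑ l ∈ s.erase i, F l i := by
  have h : ∀ (G : ℕ → ℕ → ℝ), ∑ i ∈ s, ∑ l ∈ s.erase i, G i l
      = ∑ i ∈ s, ∑ l ∈ s, if l ≠ i then G i l else 0 := by
    intro G
    refine Finset.sum_congr rfl fun i _ => ?_
    rw [← Finset.filter_ne' s i, Finset.sum_filter]
  rw [h, h, Finset.sum_comm]
  refine Finset.sum_congr rfl fun i _ => Finset.sum_congr rfl fun l _ => ?_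
  exact if_congr ne_comm rfl rfl

private lemma pairI {xi xl xj : ℝ} (h1 : xi ≠ xl) (h2 : xi ≠ xj) (h3 : xl ≠ xj) :
    1/((xj-xi)^2*((xl-xi)*(xl-xj))) + 1/((xj-xl)^2*((xi-xl)*(xi-xj)))
      = 1/((xj-xi)^2*(xj-xl)^2) := by
  have d1 : xl - xi ≠ 0 := sub_ne_zero.mpr (Ne.symm h1)
  have d2 : xj - xi ≠ 0 := sub_ne_zero.mpr (Ne.symm h2)
  have d3 : xj - xl ≠ 0 := sub_ne_zero.mpr (Ne.symm h3)
  have d4 : xi - xl ≠ 0 := sub_ne_zero.mpr h1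
  have d5 : xi - xj ≠ 0 := sub_ne_zero.mpr h2
  have d6 : xl - xj ≠ 0 := sub_ne_zero.mpr h3
  field_simp
  ring

private lemma pairO {xi xl xj : ℝ} (h1 : xi ≠ xl) (h2 : xi ≠ xj) (h3 : xl ≠ xj) :
    1/((xj-xi)^2*((xl-xi)*(xl-xj))) + 1/((xl-xi)^2*((xj-xi)*(xj-xl)))
      = 1/((xj-xi)^2*(xl-xi)^2) := by
  have d1 : xl - xi ≠ 0 := sub_ne_zero.mpr (Ne.symm h1)
  have d2 : xj - xi ≠ 0 := sub_ne_zero.mpr (Ne.symm h2)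
  have d3 : xj - xl ≠ 0 := sub_ne_zero.mpr (Ne.symm h3)
  have d6 : xl - xj ≠ 0 := sub_ne_zero.mpr h3
  field_simp
  ring

private lemma partW (N a b : ℕ) (x : ℕ → ℝ)
    (ha : 1 ≤ a) (hb : b ≤ N) (hab : a ≤ b)
    (hmono : ∀ i j, 1 ≤ i → i < j → j ≤ N → x i < x j) :
    ∑ j ∈ Finset.Icc 1 N \ Finset.Icc a b, ∑ i ∈ Finset.Icc a b,
      ((∑ l ∈ (Finset.Icc 1 N).erase i, 1 / (x l - x i))
        - (∑ l ∈ (Finset.Icc 1 N).erase j, 1 / (x l - x j))) * (1/(x j - x i)^3)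
      ≤ 2 * ∑ j ∈ Finset.Icc 1 N \ Finset.Icc a b, ∑ i ∈ Finset.Icc a b, 1/(x j - x i)^4 := by
  set S := Finset.Icc 1 N with hS
  set I := Finset.Icc a b with hI
  set O := S \ I with hOdef
  have hinj : ∀ i ∈ S, ∀ j ∈ S, i ≠ j → x i ≠ x j := by
    intro i hi j hj hij
    simp only [hS, Finset.mem_Icc] at hi hj
    rcases Nat.lt_or_ge i j with h | h
    · exact ne_of_lt (hmono i j hi.1 h hj.2)
    · exact (ne_of_lt (hmono j i hj.1 (by omega) hi.2)).symm
  have hIS : I ⊆ S := by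
    intro k hk; simp only [hI, hS, Finset.mem_Icc] at *; omega
  have hOS : ∀ j ∈ O, j ∈ S := fun j hj => (Finset.mem_sdiff.mp hj).1
  have hOembed : ∀ j ∈ O, j ∉ I := fun j hj => (Finset.mem_sdiff.mp hj).2
  -- the three-index function
  set F : ℕ → ℕ → ℕ → ℝ := fun j i l => 1/((x j - x i)^2*((x l - x i)*(x l - x j))) with hF
  -- step 1 : pointwise identity
  have step1 : ∀ j ∈ O, ∀ i ∈ I,
      ((∑ l ∈ S.erase i, 1 / (x l - x i)) - (∑ l ∈ S.erase j, 1 / (x l - x j)))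
          * (1/(x j - x i)^3)
        = 2 * (1/(x j - x i)^4) - ∑ l ∈ (S.erase i).erase j, F j i l := by
    intro j hj i hi
    have hjS := hOS j hj
    have hij : j ≠ i := fun h => hOembed j hj (h ▸ hi)
    have hjSi : j ∈ S.erase i := Finset.mem_erase.mpr ⟨hij, hjS⟩
    have hiSj : i ∈ S.erase j := Finset.mem_erase.mpr ⟨hij.symm, hIS hi⟩
    have e1 : ∑ l ∈ S.erase i, 1 / (x l - x i)
        = (∑ l ∈ (S.erase i).erase j, 1 / (x l - x i)) + 1 / (x j - x i) :=
      (Finset.sum_erase_add (S.erase i) _ hjSi).symm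
    have e2 : ∑ l ∈ S.erase j, 1 / (x l - x j)
        = (∑ l ∈ (S.erase i).erase j, 1 / (x l - x j)) + 1 / (x i - x j) := by
      rw [Finset.erase_right_comm]
      exact (Finset.sum_erase_add (S.erase j) _ hiSj).symm
    rw [e1, e2]
    have hd : x j - x i ≠ 0 := sub_ne_zero.mpr (hinj j hjS i (hIS hi) hij)
    have e3 : ((∑ l ∈ (S.erase i).erase j, 1 / (x l - x i)) + 1 / (x j - x i)
        - ((∑ l ∈ (S.erase i).erase j, 1 / (x l - x j)) + 1 / (x i - x j)))
        * (1/(x j - x i)^3)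
        = (∑ l ∈ (S.erase i).erase j, (1 / (x l - x i) - 1/(x l - x j)))
            * (1/(x j - x i)^3)
          + (1 / (x j - x i) - 1 / (x i - x j)) * (1/(x j - x i)^3) := by
      rw [Finset.sum_sub_distrib]; ring
    rw [e3, Finset.sum_mul]
    have hd' : x i - x j ≠ 0 := fun h => hd (by linarith [sub_eq_zero.mp h])
    have e4 : (1 / (x j - x i) - 1 / (x i - x j)) * (1/(x j - x i)^3)
        = 2 * (1/(x j - x i)^4) := by
      field_simp
      ring
    rw [e4]
    have e5 : ∀ l ∈ (S.erase i).erase j,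
        (1 / (x l - x i) - 1/(x l - x j)) * (1/(x j - x i)^3) = - F j i l := by
      intro l hl
      have hlj : l ≠ j := (Finset.mem_erase.mp hl).1
      have hli : l ≠ i := (Finset.mem_erase.mp (Finset.mem_erase.mp hl).2).1
      have hlS : l ∈ S := (Finset.mem_erase.mp (Finset.mem_erase.mp hl).2).2
      have d1 : x l - x i ≠ 0 := sub_ne_zero.mpr (hinj l hlS i (hIS hi) hli)
      have d2 : x l - x j ≠ 0 := sub_ne_zero.mpr (hinj l hlS j (hOS j hj) hlj)
      rw [hF]
      field_simp
      ring
    rw [Finset.sum_congr rfl e5, Finset.sum_neg_distrib]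
    ring
  -- rewrite the whole LHS
  have step2 : ∑ j ∈ O, ∑ i ∈ I,
      ((∑ l ∈ S.erase i, 1 / (x l - x i)) - (∑ l ∈ S.erase j, 1 / (x l - x j)))
        * (1/(x j - x i)^3)
      = 2 * (∑ j ∈ O, ∑ i ∈ I, 1/(x j - x i)^4)
        - ∑ j ∈ O, ∑ i ∈ I, ∑ l ∈ (S.erase i).erase j, F j i l := by
    rw [Finset.mul_sum, ← Finset.sum_sub_distrib]
    refine Finset.sum_congr rfl fun j hj => ?_
    rw [Finset.mul_sum, ← Finset.sum_sub_distrib]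
    exact Finset.sum_congr rfl fun i hi => step1 j hj i hi
  rw [step2]
  have hR : 0 ≤ ∑ j ∈ O, ∑ i ∈ I, ∑ l ∈ (S.erase i).erase j, F j i l := by
    -- split the erased set
    have hsplit : ∀ j ∈ O, ∀ i ∈ I, ∑ l ∈ (S.erase i).erase j, F j i l
        = (∑ l ∈ I.erase i, F j i l) + ∑ l ∈ O.erase j, F j i l := by
      intro j hj i hi
      have hiab : a ≤ i ∧ i ≤ b := Finset.mem_Icc.mp hi
      have hj1N : 1 ≤ j ∧ j ≤ N := Finset.mem_Icc.mp (hOS j hj)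
      have hjab : ¬(a ≤ j ∧ j ≤ b) := fun h => hOembed j hj (Finset.mem_Icc.mpr h)
      have hset : (S.erase i).erase j = (I.erase i) ∪ (O.erase j) := by
        rw [hOdef, hS, hI]
        ext l
        simp only [Finset.mem_erase, Finset.mem_union, Finset.mem_sdiff, Finset.mem_Icc]
        omega
      rw [hset, Finset.sum_union]
      rw [Finset.disjoint_left]
      intro l hl hl2
      have h1 := Finset.mem_erase.mp hl
      have h2 := Finset.mem_erase.mp hl2
      exact (Finset.mem_sdiff.mp h2.2).2 h1.2
    have hsum : ∑ j ∈ O, ∑ i ∈ I, ∑ l ∈ (S.erase i).erase j, F j i l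
        = (∑ j ∈ O, ∑ i ∈ I, ∑ l ∈ I.erase i, F j i l)
          + ∑ j ∈ O, ∑ i ∈ I, ∑ l ∈ O.erase j, F j i l := by
      rw [← Finset.sum_add_distrib]
      refine Finset.sum_congr rfl fun j hj => ?_
      rw [← Finset.sum_add_distrib]
      exact Finset.sum_congr rfl fun i hi => hsplit j hj i hi
    rw [hsum]
    have hRI : 0 ≤ ∑ j ∈ O, ∑ i ∈ I, ∑ l ∈ I.erase i, F j i l := by
      refine Finset.sum_nonneg fun j hj => ?_
      have hswap := sum_pair_swap I (fun i l => F j i l)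
      have hdouble : (∑ i ∈ I, ∑ l ∈ I.erase i, F j i l) + (∑ i ∈ I, ∑ l ∈ I.erase i, F j i l)
          = ∑ i ∈ I, ∑ l ∈ I.erase i, (F j i l + F j l i) := by
        nth_rewrite 2 [hswap]
        rw [← Finset.sum_add_distrib]
        exact Finset.sum_congr rfl fun i _ => (Finset.sum_add_distrib).symm
      have hpos : 0 ≤ ∑ i ∈ I, ∑ l ∈ I.erase i, (F j i l + F j l i) := by
        refine Finset.sum_nonneg fun i hi => Finset.sum_nonneg fun l hl => ?_
        have hli : l ≠ i := (Finset.mem_erase.mp hl).1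
        have hlI : l ∈ I := (Finset.mem_erase.mp hl).2
        have hij : j ≠ i := fun h => hOembed j hj (h ▸ hi)
        have hlj : l ≠ j := fun h => hOembed j hj (h ▸ hlI)
        have e := pairI (xi := x i) (xl := x l) (xj := x j)
          (hinj i (hIS hi) l (hIS hlI) (Ne.symm hli))
          (hinj i (hIS hi) j (hOS j hj) (fun h => hij h.symm))
          (hinj l (hIS hlI) j (hOS j hj) hlj)
        rw [hF]
        simp only []
        rw [e]
        positivity
      linarith
    have hRO : 0 ≤ ∑ j ∈ O, ∑ i ∈ I, ∑ l ∈ O.erase j, F j i l := by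
      rw [Finset.sum_comm]
      refine Finset.sum_nonneg fun i hi => ?_
      have hswap := sum_pair_swap O (fun j l => F j i l)
      have hdouble : (∑ j ∈ O, ∑ l ∈ O.erase j, F j i l) + (∑ j ∈ O, ∑ l ∈ O.erase j, F j i l)
          = ∑ j ∈ O, ∑ l ∈ O.erase j, (F j i l + F l i j) := by
        nth_rewrite 2 [hswap]
        rw [← Finset.sum_add_distrib]
        exact Finset.sum_congr rfl fun j _ => (Finset.sum_add_distrib).symm
      have hpos : 0 ≤ ∑ j ∈ O, ∑ l ∈ O.erase j, (F j i l + F l i j) := by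
        refine Finset.sum_nonneg fun j hj => Finset.sum_nonneg fun l hl => ?_
        have hlj : l ≠ j := (Finset.mem_erase.mp hl).1
        have hlO : l ∈ O := (Finset.mem_erase.mp hl).2
        have hij : j ≠ i := fun h => hOembed j hj (h ▸ hi)
        have hil : i ≠ l := fun h => hOembed l hlO (h ▸ hi)
        have e := pairO (xi := x i) (xl := x l) (xj := x j)
          (hinj i (hIS hi) l (hOS l hlO) hil)
          (hinj i (hIS hi) j (hOS j hj) (fun h => hij h.symm))
          (hinj l (hOS l hlO) j (hOS j hj) hlj)
        rw [hF]
        simp only []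
        rw [e]
        positivity
      linarith
    linarith
  linarith


private noncomputable def gap (x : ℕ → ℝ) (k : ℕ) : ℝ := 1/(x k - x (k-1))

private lemma coreA {p q : ℝ} (hp : 0 < p) (hpq : p < q) :
    (1/(q - p)) * (1/p^3 - 1/q^3) ≤ 3/p^4 := by
  have hq : 0 < q := hp.trans hpq
  have hqp : 0 < q - p := by linarith
  have h1 : (1/(q - p)) * (1/p^3 - 1/q^3) = (q^3 - p^3)/((q-p)*(p^3*q^3)) := by
    field_simp
  rw [h1, div_le_div_iff₀ (by positivity) (by positivity)]
  have h3 : 0 ≤ p^3*((q-p)^2*(3*q^2+2*p*q+p^2)) := by positivity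
  nlinarith [h3]

private lemma coreB {x y L : ℝ} (hx : 0 ≤ x) (hy : 0 ≤ y) (hL : 0 < L) :
    2*(x*y^3) ≤ x^4/(2*L^3) + (3/2)*L*y^4 := by
  have hu : 0 ≤ L*y := mul_nonneg hL.le hy
  have e1 : 0 ≤ (x - L*y)^2*x^2 := mul_nonneg (sq_nonneg _) (sq_nonneg _)
  have e2 : 0 ≤ (x - L*y)^2*(x*(L*y)) := mul_nonneg (sq_nonneg _) (mul_nonneg hx hu)
  have e3 : 0 ≤ (x - L*y)^2*(L*y)^2 := mul_nonneg (sq_nonneg _) (sq_nonneg _)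
  have expand : x^4 + 3*(L*y)^4 - 4*x*(L*y)^3
      = (x-L*y)^2*x^2 + 2*((x-L*y)^2*(x*(L*y))) + 3*((x-L*y)^2*(L*y)^2) := by ring
  have h4 : 4*x*(L*y)^3 ≤ x^4 + 3*(L*y)^4 := by linarith
  have hL3 : (0:ℝ) < L^3 := by positivity
  rw [← sub_nonneg]
  have : x^4/(2*L^3) + (3/2)*L*y^4 - 2*(x*y^3)
      = (x^4 + 3*(L*y)^4 - 4*x*(L*y)^3)/(2*L^3) := by field_simp; ring
  rw [this]
  exact div_nonneg (by linarith) (by positivity)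

private lemma flip3 (x y : ℝ) : 1/(x-y)^3 = -(1/(y-x)^3) := by
  rw [show x - y = -(y - x) from by ring, Odd.neg_pow (⟨1, by norm_num⟩ : Odd 3), one_div, one_div, inv_neg]
private lemma flip4 (x y : ℝ) : (x-y)^4 = (y-x)^4 := by
  rw [show x - y = -(y - x) from by ring, Even.neg_pow (⟨2, by norm_num⟩ : Even 4)]

private lemma use1 {u v w : ℝ} (h1 : u < v) (h2 : v < w) :
    (1/(v-u)) * (1/(w-v)^3 - 1/(w-u)^3) ≤ 3/(w-v)^4 := by
  have h := coreA (p := w-v) (q := w-u) (by linarith) (by linarith)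
  rw [show (w-u) - (w-v) = v - u from by ring] at h
  exact h

private lemma use2 {w u v : ℝ} (h1 : w < u) (h2 : u < v) :
    (1/(v-u)) * (1/(w-v)^3 - 1/(w-u)^3) ≤ 3/(w-u)^4 := by
  have h := coreA (p := u-w) (q := v-w) (by linarith) (by linarith)
  rw [show (v-w) - (u-w) = v - u from by ring] at h
  rw [flip3 w v, flip3 w u, flip4 w u]
  calc (1/(v-u)) * (-(1/(v-w)^3) - -(1/(u-w)^3))
      = 1/(v-u) * (1/(u-w)^3 - 1/(v-w)^3) := by ring
    _ ≤ 3/(u-w)^4 := h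

private lemma telescope (N a : ℕ) (ha : 1 ≤ a) (g F : ℕ → ℝ) :
    ∀ b, a ≤ b → b ≤ N →
    ∑ i ∈ Finset.Icc a b, ((if 1 < i then g i else 0) - (if i < N then g (i+1) else 0)) * F i
      = (if 1 < a then g a * F a else 0) - (if b < N then g (b+1) * F b else 0)
        + ∑ i ∈ Finset.Icc a (b-1), g (i+1) * (F (i+1) - F i) := by
  intro b hab
  induction b, hab using Nat.le_induction with
  | base =>
    intro _
    have h1 : Finset.Icc a (a-1) = ∅ := by
      apply Finset.Icc_eq_empty; omega
    simp only [Finset.Icc_self, Finset.sum_singleton, h1, Finset.sum_empty]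
    split_ifs <;> ring
  | succ b hab ih =>
    intro hbN
    have hb : b < N := by omega
    rw [Finset.sum_Icc_succ_top (by omega : a ≤ b + 1), ih (by omega)]
    have hb1 : b - 1 + 1 = b := by omega
    have : Finset.Icc a (b+1-1) = Finset.Icc a ((b-1)+1) := by congr 1; omega
    rw [this, Finset.sum_Icc_succ_top (by omega : a ≤ (b-1)+1), hb1]
    have h2 : (1 < b + 1) := by omega
    simp only [if_pos hb, if_pos h2]
    split_ifs <;> ring

private lemma sum_shift (a b : ℕ) (hb : 1 ≤ b) (f : ℕ → ℝ) :
    ∑ i ∈ Finset.Icc a (b-1), f (i+1) = ∑ i ∈ Finset.Icc (a+1) b, f i := by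
  have h : b - 1 + 1 = b := by omega
  rw [show Finset.Icc (a+1) b = Finset.Icc (a+1) ((b-1)+1) from by rw [h],
    ← Finset.map_add_right_Icc, Finset.sum_map]
  rfl

private lemma youngSum (N : ℕ) (hN2 : 2 ≤ N) (J : Finset ℕ) (hJcard : (J.card : ℝ) ≤ N)
    (G : ℝ) (y : ℕ → ℝ) (hG : 0 ≤ G) (hy : ∀ j ∈ J, 0 ≤ y j) :
    ∑ j ∈ J, 2*(G * (y j)^3)
      ≤ 2*((N:ℝ)^((1:ℝ)/4))*(G^4 + ∑ j ∈ J, (y j)^4) := by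
  set L : ℝ := (N:ℝ)^((1:ℝ)/4) with hLdef
  have hL : 0 < L := Real.rpow_pos_of_pos (by exact_mod_cast (by omega : 0 < N)) _
  have hN4 : (N:ℝ) = L^4 := by
    rw [hLdef, ← Real.rpow_natCast ((N:ℝ)^((1:ℝ)/4)) 4, ← Real.rpow_mul (Nat.cast_nonneg N)]
    norm_num
  have hs : 0 ≤ ∑ j ∈ J, (y j)^4 := Finset.sum_nonneg fun j hj => by positivity
  have hG4 : (0:ℝ) ≤ G^4 := by positivity
  calc ∑ j ∈ J, 2*(G * (y j)^3)
      ≤ ∑ j ∈ J, (G^4/(2*L^3) + (3/2)*L*(y j)^4) :=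
        Finset.sum_le_sum fun j hj => coreB hG (hy j hj) hL
    _ = (J.card : ℝ) * (G^4/(2*L^3)) + (3/2)*L*∑ j ∈ J, (y j)^4 := by
        rw [Finset.sum_add_distrib, Finset.sum_const, nsmul_eq_mul, ← Finset.mul_sum]
    _ ≤ (N:ℝ) * (G^4/(2*L^3)) + (3/2)*L*∑ j ∈ J, (y j)^4 := by
        have h0 : (0:ℝ) ≤ G^4/(2*L^3) := by positivity
        have := mul_le_mul_of_nonneg_right hJcard h0
        linarith
    _ = (L/2)*G^4 + (3/2)*L*∑ j ∈ J, (y j)^4 := by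
        rw [hN4]; field_simp
    _ ≤ 2*L*(G^4 + ∑ j ∈ J, (y j)^4) := by
        nlinarith [mul_nonneg hL.le hG4, mul_nonneg hL.le hs]


private lemma partI (N a b : ℕ) (x : ℕ → ℝ) (hN2 : 2 ≤ N)
    (ha : 1 ≤ a) (hb : b ≤ N) (hab : a ≤ b)
    (hmono : ∀ i j, 1 ≤ i → i < j → j ≤ N → x i < x j) :
    2 * ∑ j ∈ Finset.Icc 1 N \ Finset.Icc a b, ∑ i ∈ Finset.Icc a b,
        ((if 1 < i then gap x i else 0) - (if i < N then gap x (i+1) else 0))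
          * (1/(x j - x i)^3)
      ≤ (6 + 4*(N:ℝ)^((1:ℝ)/4))
        * ∑ j ∈ Finset.Icc 1 N \ Finset.Icc a b, ∑ i ∈ Finset.Icc a b, 1/(x j - x i)^4 := by
  set L : ℝ := (N:ℝ)^((1:ℝ)/4) with hLdef
  have hL : 0 < L := Real.rpow_pos_of_pos (by exact_mod_cast (by omega : 0 < N)) _
  have hN4 : (N:ℝ) = L^4 := by
    rw [hLdef, ← Real.rpow_natCast ((N:ℝ)^((1:ℝ)/4)) 4, ← Real.rpow_mul (Nat.cast_nonneg N)]
    norm_num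
  set O := Finset.Icc 1 N \ Finset.Icc a b with hOdef
  set Om := Finset.Icc 1 (a-1) with hOm
  set Op := Finset.Icc (b+1) N with hOp
  have hOun : O = Om ∪ Op := by
    rw [hOdef, hOm, hOp]; ext l
    simp only [Finset.mem_sdiff, Finset.mem_union, Finset.mem_Icc]
    omega
  have hdisj : Disjoint Om Op := by
    rw [hOm, hOp, Finset.disjoint_left]
    intro l h1 h2
    simp only [Finset.mem_Icc] at h1 h2
    omega
  have hOmemb : ∀ j ∈ O, 1 ≤ j ∧ j ≤ N ∧ (j < a ∨ b < j) := by
    intro j hj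
    rw [hOdef] at hj
    have := Finset.mem_sdiff.mp hj
    simp only [Finset.mem_Icc] at this
    omega
  have hOsum : ∀ f : ℕ → ℝ, ∑ j ∈ O, f j = ∑ j ∈ Om, f j + ∑ j ∈ Op, f j := by
    intro f; rw [hOun, Finset.sum_union hdisj]
  have hH4 : 0 ≤ ∑ j ∈ O, ∑ i ∈ Finset.Icc a b, 1/(x j - x i)^4 :=
    Finset.sum_nonneg fun j _ => Finset.sum_nonneg fun i _ => by positivity
  -- telescope each inner sum
  have tel : ∀ j, ∑ i ∈ Finset.Icc a b,
      ((if 1 < i then gap x i else 0) - (if i < N then gap x (i+1) else 0)) * (1/(x j - x i)^3)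
      = (if 1 < a then gap x a * (1/(x j - x a)^3) else 0)
        - (if b < N then gap x (b+1) * (1/(x j - x b)^3) else 0)
        + ∑ i ∈ Finset.Icc a (b-1), gap x (i+1) * (1/(x j - x (i+1))^3 - 1/(x j - x i)^3) :=
    fun j => telescope N a ha (gap x) (fun i => 1/(x j - x i)^3) b hab hb
  rw [Finset.sum_congr rfl fun j _ => tel j]
  rw [Finset.sum_add_distrib, Finset.sum_sub_distrib]
  -- three bounds
  have hC : ∑ j ∈ O, ∑ i ∈ Finset.Icc a (b-1),
      gap x (i+1) * (1/(x j - x (i+1))^3 - 1/(x j - x i)^3)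
      ≤ 3 * ∑ j ∈ O, ∑ i ∈ Finset.Icc a b, 1/(x j - x i)^4 := by
    have hCj : ∀ j ∈ O, ∑ i ∈ Finset.Icc a (b-1),
        gap x (i+1) * (1/(x j - x (i+1))^3 - 1/(x j - x i)^3)
        ≤ ∑ i ∈ Finset.Icc a b, 3/(x j - x i)^4 := by
      intro j hj
      obtain ⟨hj1, hjN, hcase⟩ := hOmemb j hj
      rcases hcase with hja | hbj
      · -- j < a : use2
        calc ∑ i ∈ Finset.Icc a (b-1), gap x (i+1) * (1/(x j - x (i+1))^3 - 1/(x j - x i)^3)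
            ≤ ∑ i ∈ Finset.Icc a (b-1), 3/(x j - x i)^4 := by
              refine Finset.sum_le_sum fun i hi => ?_
              have hi' := Finset.mem_Icc.mp hi
              have h1 : x j < x i := hmono j i hj1 (by omega) (by omega)
              have h2 : x i < x (i+1) := hmono i (i+1) (by omega) (by omega) (by omega)
              have := use2 h1 h2
              simpa [gap] using this
          _ ≤ ∑ i ∈ Finset.Icc a b, 3/(x j - x i)^4 := by
              refine Finset.sum_le_sum_of_subset_of_nonneg
                (Finset.Icc_subset_Icc_right (by omega)) fun i _ _ => by positivity
      · -- b < j : use1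
        calc ∑ i ∈ Finset.Icc a (b-1), gap x (i+1) * (1/(x j - x (i+1))^3 - 1/(x j - x i)^3)
            ≤ ∑ i ∈ Finset.Icc a (b-1), 3/(x j - x (i+1))^4 := by
              refine Finset.sum_le_sum fun i hi => ?_
              have hi' := Finset.mem_Icc.mp hi
              have h1 : x i < x (i+1) := hmono i (i+1) (by omega) (by omega) (by omega)
              have h2 : x (i+1) < x j := hmono (i+1) j (by omega) (by omega) (by omega)
              have := use1 h1 h2
              simpa [gap] using this
          _ = ∑ i ∈ Finset.Icc (a+1) b, 3/(x j - x i)^4 :=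
              sum_shift a b (le_trans ha hab) (fun i => 3/(x j - x i)^4)
          _ ≤ ∑ i ∈ Finset.Icc a b, 3/(x j - x i)^4 := by
              refine Finset.sum_le_sum_of_subset_of_nonneg
                (Finset.Icc_subset_Icc_left (by omega)) fun i _ _ => by positivity
    calc ∑ j ∈ O, ∑ i ∈ Finset.Icc a (b-1),
          gap x (i+1) * (1/(x j - x (i+1))^3 - 1/(x j - x i)^3)
        ≤ ∑ j ∈ O, ∑ i ∈ Finset.Icc a b, 3/(x j - x i)^4 := Finset.sum_le_sum hCj
      _ = 3 * ∑ j ∈ O, ∑ i ∈ Finset.Icc a b, 1/(x j - x i)^4 := by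
          rw [Finset.mul_sum]
          refine Finset.sum_congr rfl fun j _ => ?_
          rw [Finset.mul_sum]
          exact Finset.sum_congr rfl fun i _ => by rw [← mul_one_div]
  -- boundary terms
  have haN : a ≤ N := le_trans hab hb
  have hH4' : 0 ≤ (N:ℝ)^((1:ℝ)/4) * ∑ j ∈ O, ∑ i ∈ Finset.Icc a b, 1/(x j - x i)^4 :=
    mul_nonneg (by positivity) hH4
  have hBa : 2 * ∑ j ∈ O, (if 1 < a then gap x a * (1/(x j - x a)^3) else 0)
      ≤ 2*(L * ∑ j ∈ O, ∑ i ∈ Finset.Icc a b, 1/(x j - x i)^4) := by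
    by_cases h1a : 1 < a
    · simp only [if_pos h1a]
      rw [hOsum (fun j => gap x a * (1/(x j - x a)^3))]
      have hga : 0 < x a - x (a-1) :=
        sub_pos.mpr (hmono (a-1) a (by omega) (by omega) haN)
      have hgap : 0 ≤ gap x a := le_of_lt (by simp only [gap]; exact one_div_pos.mpr hga)
      have hOmle : ∑ j ∈ Om, gap x a * (1/(x j - x a)^3) ≤ 0 := by
        refine Finset.sum_nonpos fun j hj => ?_
        rw [hOm] at hj
        have hj' := Finset.mem_Icc.mp hj
        have hja : x j < x a := hmono j a (by omega) (by omega) haN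
        have hneg : (x j - x a)^3 < 0 :=
          Odd.pow_neg (⟨1, by norm_num⟩ : Odd 3) (by linarith)
        exact mul_nonpos_of_nonneg_of_nonpos hgap (le_of_lt (one_div_neg.mpr hneg))
      have hOple : 2 * ∑ j ∈ Op, gap x a * (1/(x j - x a)^3)
          ≤ 2*(L * ∑ j ∈ O, ∑ i ∈ Finset.Icc a b, 1/(x j - x i)^4) := by
        have hrw : 2 * ∑ j ∈ Op, gap x a * (1/(x j - x a)^3)
            = ∑ j ∈ Op, 2*(gap x a * (1/(x j - x a))^3) := by
          rw [Finset.mul_sum]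
          exact Finset.sum_congr rfl fun j _ => by rw [one_div_pow]
        rw [hrw]
        have hcard : ((Op.card : ℕ) : ℝ) ≤ (N : ℝ) := by
          rw [hOp, Nat.card_Icc]
          exact_mod_cast (by omega : N + 1 - (b+1) ≤ N)
        have hy : ∀ j ∈ Op, 0 ≤ 1/(x j - x a) := by
          intro j hj
          rw [hOp] at hj
          have hj' := Finset.mem_Icc.mp hj
          have : x a < x j := hmono a j (by omega) (by omega) (by omega)
          exact le_of_lt (one_div_pos.mpr (sub_pos.mpr this))
        have hYS := youngSum N hN2 Op hcard (gap x a) (fun j => 1/(x j - x a)) hgap hy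
        refine le_trans hYS ?_
        rw [← hLdef]
        have hclaim : (gap x a)^4 + ∑ j ∈ Op, (1/(x j - x a))^4
            ≤ ∑ j ∈ O, ∑ i ∈ Finset.Icc a b, 1/(x j - x i)^4 := by
          have hGeq : (gap x a)^4 = 1/(x (a-1) - x a)^4 := by
            rw [gap, one_div_pow, flip4]
          have hnotmem : a - 1 ∉ Op := by
            rw [hOp]; simp only [Finset.mem_Icc]; omega
          have hyeq : ∀ j ∈ Op, (1/(x j - x a))^4 = 1/(x j - x a)^4 :=
            fun j _ => one_div_pow _ _
          calc (gap x a)^4 + ∑ j ∈ Op, (1/(x j - x a))^4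
              = ∑ j ∈ insert (a-1) Op, 1/(x j - x a)^4 := by
                rw [Finset.sum_insert hnotmem, ← hGeq,
                  Finset.sum_congr rfl hyeq]
            _ ≤ ∑ j ∈ O, 1/(x j - x a)^4 := by
                refine Finset.sum_le_sum_of_subset_of_nonneg ?_ fun j _ _ => by positivity
                intro l hl
                rcases Finset.mem_insert.mp hl with h | h
                · subst h
                  rw [hOdef, Finset.mem_sdiff]
                  simp only [Finset.mem_Icc]
                  omega
                · rw [hOp] at h
                  have h' := Finset.mem_Icc.mp h
                  rw [hOdef, Finset.mem_sdiff]
                  simp only [Finset.mem_Icc]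
                  omega
            _ ≤ ∑ j ∈ O, ∑ i ∈ Finset.Icc a b, 1/(x j - x i)^4 := by
                refine Finset.sum_le_sum fun j _ => ?_
                exact Finset.single_le_sum (f := fun i => 1/(x j - x i)^4)
                  (fun i _ => by positivity) (Finset.mem_Icc.mpr ⟨le_refl a, hab⟩)
        nlinarith [hclaim, hL]
      linarith
    · simp only [if_neg h1a, Finset.sum_const_zero, mul_zero]
      rw [← hLdef] at hH4'
      linarith
  have hBb : -(2 * ∑ j ∈ O, (if b < N then gap x (b+1) * (1/(x j - x b)^3) else 0))
      ≤ 2*(L * ∑ j ∈ O, ∑ i ∈ Finset.Icc a b, 1/(x j - x i)^4) := by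
    by_cases hbN : b < N
    · simp only [if_pos hbN]
      rw [hOsum (fun j => gap x (b+1) * (1/(x j - x b)^3))]
      have hgb : 0 < x (b+1) - x b :=
        sub_pos.mpr (hmono b (b+1) (by omega) (by omega) (by omega))
      have hgapeq : gap x (b+1) = 1/(x (b+1) - x b) := by simp [gap]
      have hgap : 0 ≤ gap x (b+1) := by
        rw [hgapeq]; exact le_of_lt (one_div_pos.mpr hgb)
      have hOple : 0 ≤ ∑ j ∈ Op, gap x (b+1) * (1/(x j - x b)^3) := by
        refine Finset.sum_nonneg fun j hj => ?_
        rw [hOp] at hj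
        have hj' := Finset.mem_Icc.mp hj
        have hxbj : x b < x j := hmono b j (by omega) (by omega) (by omega)
        have hpos : (0:ℝ) < (x j - x b)^3 := pow_pos (sub_pos.mpr hxbj) 3
        exact mul_nonneg hgap (le_of_lt (one_div_pos.mpr hpos))
      have hOmle : -(2 * ∑ j ∈ Om, gap x (b+1) * (1/(x j - x b)^3))
          ≤ 2*(L * ∑ j ∈ O, ∑ i ∈ Finset.Icc a b, 1/(x j - x i)^4) := by
        have hrw : -(2 * ∑ j ∈ Om, gap x (b+1) * (1/(x j - x b)^3))
            = ∑ j ∈ Om, 2*(gap x (b+1) * (1/(x b - x j))^3) := by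
          rw [Finset.mul_sum, ← Finset.sum_neg_distrib]
          refine Finset.sum_congr rfl fun j _ => ?_
          rw [flip3 (x j) (x b), one_div_pow]
          ring
        rw [hrw]
        have hcard : ((Om.card : ℕ) : ℝ) ≤ (N : ℝ) := by
          rw [hOm, Nat.card_Icc]
          exact_mod_cast (by omega : a - 1 + 1 - 1 ≤ N)
        have hy : ∀ j ∈ Om, 0 ≤ 1/(x b - x j) := by
          intro j hj
          rw [hOm] at hj
          have hj' := Finset.mem_Icc.mp hj
          have : x j < x b := hmono j b (by omega) (by omega) hb
          exact le_of_lt (one_div_pos.mpr (sub_pos.mpr this))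
        have hYS := youngSum N hN2 Om hcard (gap x (b+1)) (fun j => 1/(x b - x j)) hgap hy
        refine le_trans hYS ?_
        rw [← hLdef]
        have hclaim : (gap x (b+1))^4 + ∑ j ∈ Om, (1/(x b - x j))^4
            ≤ ∑ j ∈ O, ∑ i ∈ Finset.Icc a b, 1/(x j - x i)^4 := by
          have hGeq : (gap x (b+1))^4 = 1/(x (b+1) - x b)^4 := by
            rw [hgapeq, one_div_pow]
          have hnotmem : b + 1 ∉ Om := by
            rw [hOm]; simp only [Finset.mem_Icc]; omega
          have hyeq : ∀ j ∈ Om, (1/(x b - x j))^4 = 1/(x j - x b)^4 :=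
            fun j _ => by rw [one_div_pow, flip4]
          calc (gap x (b+1))^4 + ∑ j ∈ Om, (1/(x b - x j))^4
              = ∑ j ∈ insert (b+1) Om, 1/(x j - x b)^4 := by
                rw [Finset.sum_insert hnotmem, ← hGeq,
                  Finset.sum_congr rfl hyeq]
            _ ≤ ∑ j ∈ O, 1/(x j - x b)^4 := by
                refine Finset.sum_le_sum_of_subset_of_nonneg ?_ fun j _ _ => by positivity
                intro l hl
                rcases Finset.mem_insert.mp hl with h | h
                · subst h
                  rw [hOdef, Finset.mem_sdiff]
                  simp only [Finset.mem_Icc]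
                  omega
                · rw [hOm] at h
                  have h' := Finset.mem_Icc.mp h
                  rw [hOdef, Finset.mem_sdiff]
                  simp only [Finset.mem_Icc]
                  omega
            _ ≤ ∑ j ∈ O, ∑ i ∈ Finset.Icc a b, 1/(x j - x i)^4 := by
                refine Finset.sum_le_sum fun j _ => ?_
                exact Finset.single_le_sum (f := fun i => 1/(x j - x i)^4)
                  (fun i _ => by positivity) (Finset.mem_Icc.mpr ⟨hab, le_refl b⟩)
        nlinarith [hclaim, hL]
      linarith
    · simp only [if_neg hbN, Finset.sum_const_zero, mul_zero, neg_zero]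
      rw [← hLdef] at hH4'
      linarith
  -- combine
  have hfinal : (6 + 4*L) * ∑ j ∈ O, ∑ i ∈ Finset.Icc a b, 1/(x j - x i)^4
      = 6 * (∑ j ∈ O, ∑ i ∈ Finset.Icc a b, 1/(x j - x i)^4)
        + 2*(L * ∑ j ∈ O, ∑ i ∈ Finset.Icc a b, 1/(x j - x i)^4)
        + 2*(L * ∑ j ∈ O, ∑ i ∈ Finset.Icc a b, 1/(x j - x i)^4) := by ring
  linarith
private lemma use3 {u v w : ℝ} (h1 : u < v) (h2 : v < w) :
    (1/(w-v)) * (1/(v-u)^3 - 1/(w-u)^3) ≤ 3/(v-u)^4 := by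
  have h := coreA (p := v-u) (q := w-u) (by linarith) (by linarith)
  rw [show (w-u) - (v-u) = w - v from by ring] at h
  exact h

private lemma use4 {s m u : ℝ} (h1 : s < m) (h2 : m < u) :
    (1/(m-s)) * (1/(s-u)^3 - 1/(m-u)^3) ≤ 3/(m-u)^4 := by
  have h := coreA (p := u-m) (q := u-s) (by linarith) (by linarith)
  rw [show (u-s) - (u-m) = m - s from by ring] at h
  rw [flip3 s u, flip3 m u, show (m-u)^4 = (u-m)^4 from flip4 m u]
  calc (1/(m-s)) * (-(1/(u-s)^3) - -(1/(u-m)^3))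
      = 1/(m-s) * (1/(u-m)^3 - 1/(u-s)^3) := by ring
    _ ≤ 3/(u-m)^4 := h

private lemma partO (N a b : ℕ) (x : ℕ → ℝ) (hN2 : 2 ≤ N)
    (ha : 1 ≤ a) (hb : b ≤ N) (hab : a ≤ b)
    (hmono : ∀ i j, 1 ≤ i → i < j → j ≤ N → x i < x j) :
    -(2 * ∑ j ∈ Finset.Icc 1 N \ Finset.Icc a b, ∑ i ∈ Finset.Icc a b,
        ((if 1 < j then gap x j else 0) - (if j < N then gap x (j+1) else 0))
          * (1/(x j - x i)^3))
      ≤ 6 * ∑ j ∈ Finset.Icc 1 N \ Finset.Icc a b, ∑ i ∈ Finset.Icc a b, 1/(x j - x i)^4 := by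
  set O := Finset.Icc 1 N \ Finset.Icc a b with hOdef
  set Om := Finset.Icc 1 (a-1) with hOm
  set Op := Finset.Icc (b+1) N with hOp
  have hOun : O = Om ∪ Op := by
    rw [hOdef, hOm, hOp]; ext l
    simp only [Finset.mem_sdiff, Finset.mem_union, Finset.mem_Icc]
    omega
  have hdisj : Disjoint Om Op := by
    rw [hOm, hOp, Finset.disjoint_left]
    intro l h1 h2
    simp only [Finset.mem_Icc] at h1 h2
    omega
  have hOsum : ∀ f : ℕ → ℝ, ∑ j ∈ O, f j = ∑ j ∈ Om, f j + ∑ j ∈ Op, f j := by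
    intro f; rw [hOun, Finset.sum_union hdisj]
  -- per-i bound for the Om part
  have hMi : ∀ i ∈ Finset.Icc a b,
      -(2 * ∑ j ∈ Om, ((if 1 < j then gap x j else 0) - (if j < N then gap x (j+1) else 0))
          * (1/(x j - x i)^3))
        ≤ ∑ j ∈ Om, 6/(x j - x i)^4 := by
    intro i hi
    have hi' := Finset.mem_Icc.mp hi
    by_cases h1a : 1 < a
    · have tel := telescope N 1 le_rfl (gap x) (fun j => 1/(x j - x i)^3) (a-1)
        (by omega) (by omega)
      rw [hOm, tel]
      simp only [if_neg (lt_irrefl 1), if_pos (show a - 1 < N by omega),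
        show a - 1 + 1 = a from by omega]
      have hbdry : gap x a * (1/(x (a-1) - x i)^3) ≤ 0 := by
        have hga : 0 < x a - x (a-1) :=
          sub_pos.mpr (hmono (a-1) a (by omega) (by omega) (by omega))
        have hgap : 0 ≤ gap x a := le_of_lt (by simp only [gap]; exact one_div_pos.mpr hga)
        have hja : x (a-1) < x i := hmono (a-1) i (by omega) (by omega) (by omega)
        have hneg : (x (a-1) - x i)^3 < 0 :=
          Odd.pow_neg (⟨1, by norm_num⟩ : Odd 3) (by linarith)
        exact mul_nonpos_of_nonneg_of_nonpos hgap (le_of_lt (one_div_neg.mpr hneg))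
      have hint : -(∑ j ∈ Finset.Icc 1 (a-1-1),
            gap x (j+1) * (1/(x (j+1) - x i)^3 - 1/(x j - x i)^3))
          ≤ ∑ j ∈ Finset.Icc 1 (a-1), 3/(x j - x i)^4 := by
        calc -(∑ j ∈ Finset.Icc 1 (a-1-1),
              gap x (j+1) * (1/(x (j+1) - x i)^3 - 1/(x j - x i)^3))
            = ∑ j ∈ Finset.Icc 1 (a-1-1),
              -(gap x (j+1) * (1/(x (j+1) - x i)^3 - 1/(x j - x i)^3)) := by
              rw [Finset.sum_neg_distrib]
          _ ≤ ∑ j ∈ Finset.Icc 1 (a-1-1), 3/(x (j+1) - x i)^4 := by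
              refine Finset.sum_le_sum fun j hj => ?_
              have hj' := Finset.mem_Icc.mp hj
              have h1 : x j < x (j+1) := hmono j (j+1) (by omega) (by omega) (by omega)
              have h2 : x (j+1) < x i := hmono (j+1) i (by omega) (by omega) (by omega)
              have e : -(gap x (j+1) * (1/(x (j+1) - x i)^3 - 1/(x j - x i)^3))
                  = (1/(x (j+1) - x j)) * (1/(x j - x i)^3 - 1/(x (j+1) - x i)^3) := by
                simp only [gap, Nat.add_sub_cancel]
                ring
              rw [e]
              exact use4 h1 h2
          _ = ∑ j ∈ Finset.Icc 2 (a-1), 3/(x j - x i)^4 :=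
              sum_shift 1 (a-1) (by omega) (fun j => 3/(x j - x i)^4)
          _ ≤ ∑ j ∈ Finset.Icc 1 (a-1), 3/(x j - x i)^4 := by
              refine Finset.sum_le_sum_of_subset_of_nonneg
                (Finset.Icc_subset_Icc_left (by omega)) fun j _ _ => by positivity
      have h63 : ∑ j ∈ Finset.Icc 1 (a-1), 6/(x j - x i)^4
          = 2 * ∑ j ∈ Finset.Icc 1 (a-1), 3/(x j - x i)^4 := by
        rw [Finset.mul_sum]
        exact Finset.sum_congr rfl fun j _ => by ring
      rw [h63]
      linarith
    · have hOmempty : Om = ∅ := by rw [hOm]; apply Finset.Icc_eq_empty; omega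
      rw [hOmempty]
      simp
  -- per-i bound for the Op part
  have hPi : ∀ i ∈ Finset.Icc a b,
      -(2 * ∑ j ∈ Op, ((if 1 < j then gap x j else 0) - (if j < N then gap x (j+1) else 0))
          * (1/(x j - x i)^3))
        ≤ ∑ j ∈ Op, 6/(x j - x i)^4 := by
    intro i hi
    have hi' := Finset.mem_Icc.mp hi
    by_cases hbN : b < N
    · have tel := telescope N (b+1) (by omega) (gap x) (fun j => 1/(x j - x i)^3) N
        (by omega) le_rfl
      rw [hOp, tel]
      simp only [if_pos (show 1 < b + 1 by omega), if_neg (lt_irrefl N)]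
      have hbdry : 0 ≤ gap x (b+1) * (1/(x (b+1) - x i)^3) := by
        have hgb : 0 < x (b+1) - x b :=
          sub_pos.mpr (hmono b (b+1) (by omega) (by omega) (by omega))
        have hgapeq : gap x (b+1) = 1/(x (b+1) - x b) := by simp [gap]
        have hgap : 0 ≤ gap x (b+1) := by
          rw [hgapeq]; exact le_of_lt (one_div_pos.mpr hgb)
        have hbi : x i < x (b+1) := hmono i (b+1) (by omega) (by omega) (by omega)
        have hpos : (0:ℝ) < (x (b+1) - x i)^3 := pow_pos (sub_pos.mpr hbi) 3
        exact mul_nonneg hgap (le_of_lt (one_div_pos.mpr hpos))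
      have hint : -(∑ j ∈ Finset.Icc (b+1) (N-1),
            gap x (j+1) * (1/(x (j+1) - x i)^3 - 1/(x j - x i)^3))
          ≤ ∑ j ∈ Finset.Icc (b+1) N, 3/(x j - x i)^4 := by
        calc -(∑ j ∈ Finset.Icc (b+1) (N-1),
              gap x (j+1) * (1/(x (j+1) - x i)^3 - 1/(x j - x i)^3))
            = ∑ j ∈ Finset.Icc (b+1) (N-1),
              -(gap x (j+1) * (1/(x (j+1) - x i)^3 - 1/(x j - x i)^3)) := by
              rw [Finset.sum_neg_distrib]
          _ ≤ ∑ j ∈ Finset.Icc (b+1) (N-1), 3/(x j - x i)^4 := by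
              refine Finset.sum_le_sum fun j hj => ?_
              have hj' := Finset.mem_Icc.mp hj
              have h1 : x i < x j := hmono i j (by omega) (by omega) (by omega)
              have h2 : x j < x (j+1) := hmono j (j+1) (by omega) (by omega) (by omega)
              have e : -(gap x (j+1) * (1/(x (j+1) - x i)^3 - 1/(x j - x i)^3))
                  = (1/(x (j+1) - x j)) * (1/(x j - x i)^3 - 1/(x (j+1) - x i)^3) := by
                simp only [gap, Nat.add_sub_cancel]
                ring
              rw [e]
              exact use3 h1 h2
          _ ≤ ∑ j ∈ Finset.Icc (b+1) N, 3/(x j - x i)^4 := by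
              refine Finset.sum_le_sum_of_subset_of_nonneg
                (Finset.Icc_subset_Icc_right (by omega)) fun j _ _ => by positivity
      have h63 : ∑ j ∈ Finset.Icc (b+1) N, 6/(x j - x i)^4
          = 2 * ∑ j ∈ Finset.Icc (b+1) N, 3/(x j - x i)^4 := by
        rw [Finset.mul_sum]
        exact Finset.sum_congr rfl fun j _ => by ring
      rw [h63]
      linarith
    · have hOpempty : Op = ∅ := by rw [hOp]; apply Finset.Icc_eq_empty; omega
      rw [hOpempty]
      simp
  -- assemble
  have e0 : ∑ j ∈ O, ∑ i ∈ Finset.Icc a b,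
        ((if 1 < j then gap x j else 0) - (if j < N then gap x (j+1) else 0)) * (1/(x j - x i)^3)
      = (∑ i ∈ Finset.Icc a b, ∑ j ∈ Om,
          ((if 1 < j then gap x j else 0) - (if j < N then gap x (j+1) else 0)) * (1/(x j - x i)^3))
        + ∑ i ∈ Finset.Icc a b, ∑ j ∈ Op,
          ((if 1 < j then gap x j else 0) - (if j < N then gap x (j+1) else 0)) * (1/(x j - x i)^3) := by
    rw [Finset.sum_comm, ← Finset.sum_add_distrib]
    exact Finset.sum_congr rfl fun i _ => hOsum _
  rw [e0]
  have e1 : 6 * ∑ j ∈ O, ∑ i ∈ Finset.Icc a b, 1/(x j - x i)^4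
      = (∑ i ∈ Finset.Icc a b, ∑ j ∈ Om, 6/(x j - x i)^4)
        + ∑ i ∈ Finset.Icc a b, ∑ j ∈ Op, 6/(x j - x i)^4 := by
    have t : ∀ (J : Finset ℕ), ∑ j ∈ J, ∑ i ∈ Finset.Icc a b, 6/(x j - x i)^4
        = ∑ i ∈ Finset.Icc a b, ∑ j ∈ J, 6/(x j - x i)^4 := fun J => Finset.sum_comm
    calc 6 * ∑ j ∈ O, ∑ i ∈ Finset.Icc a b, 1/(x j - x i)^4
        = ∑ j ∈ O, ∑ i ∈ Finset.Icc a b, 6/(x j - x i)^4 := by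
          rw [Finset.mul_sum]
          refine Finset.sum_congr rfl fun j _ => ?_
          rw [Finset.mul_sum]
          exact Finset.sum_congr rfl fun i _ => by ring
      _ = (∑ j ∈ Om, ∑ i ∈ Finset.Icc a b, 6/(x j - x i)^4)
          + ∑ j ∈ Op, ∑ i ∈ Finset.Icc a b, 6/(x j - x i)^4 :=
          hOsum (fun j => ∑ i ∈ Finset.Icc a b, 6/(x j - x i)^4)
      _ = _ := by rw [t Om, t Op]
  rw [e1]
  have hM : -(2 * ∑ i ∈ Finset.Icc a b, ∑ j ∈ Om,
        ((if 1 < j then gap x j else 0) - (if j < N then gap x (j+1) else 0)) * (1/(x j - x i)^3))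
      ≤ ∑ i ∈ Finset.Icc a b, ∑ j ∈ Om, 6/(x j - x i)^4 := by
    calc -(2 * ∑ i ∈ Finset.Icc a b, ∑ j ∈ Om,
          ((if 1 < j then gap x j else 0) - (if j < N then gap x (j+1) else 0)) * (1/(x j - x i)^3))
        = ∑ i ∈ Finset.Icc a b, -(2 * ∑ j ∈ Om,
          ((if 1 < j then gap x j else 0) - (if j < N then gap x (j+1) else 0)) * (1/(x j - x i)^3)) := by
          rw [Finset.mul_sum, Finset.sum_neg_distrib]
      _ ≤ _ := Finset.sum_le_sum hMi
  have hP : -(2 * ∑ i ∈ Finset.Icc a b, ∑ j ∈ Op,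
        ((if 1 < j then gap x j else 0) - (if j < N then gap x (j+1) else 0)) * (1/(x j - x i)^3))
      ≤ ∑ i ∈ Finset.Icc a b, ∑ j ∈ Op, 6/(x j - x i)^4 := by
    calc -(2 * ∑ i ∈ Finset.Icc a b, ∑ j ∈ Op,
          ((if 1 < j then gap x j else 0) - (if j < N then gap x (j+1) else 0)) * (1/(x j - x i)^3))
        = ∑ i ∈ Finset.Icc a b, -(2 * ∑ j ∈ Op,
          ((if 1 < j then gap x j else 0) - (if j < N then gap x (j+1) else 0)) * (1/(x j - x i)^3)) := by
          rw [Finset.mul_sum, Finset.sum_neg_distrib]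
      _ ≤ _ := Finset.sum_le_sum hPi
  linarith

private lemma key_s6 (N a b : ℕ) (χ : ℝ) (hχ : 0 < χ) (hN2 : 2 ≤ N)
    (ha : 1 ≤ a) (hb : b ≤ N) (hab : a ≤ b) (x : ℕ → ℝ)
    (hmono : ∀ i j, 1 ≤ i → i < j → j ≤ N → x i < x j) :
    ∑ j ∈ Finset.Icc 1 N \ Finset.Icc a b, ∑ i ∈ Finset.Icc a b,
      (-2) * (ksRHS N χ x j - ksRHS N χ x i) / (x j - x i)^3
      ≤ (12 + 14*χ + 4*(N:ℝ)^((1:ℝ)/4)) * extPot N (Finset.Icc a b) 4 x := by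
  have hpoint : ∀ j i : ℕ,
      (-2) * (ksRHS N χ x j - ksRHS N χ x i) / (x j - x i)^3
      = 2 * (((if 1 < i then gap x i else 0) - (if i < N then gap x (i+1) else 0))
            * (1/(x j - x i)^3))
        + (-(2 * (((if 1 < j then gap x j else 0) - (if j < N then gap x (j+1) else 0))
            * (1/(x j - x i)^3))))
        + (4*χ*hN N) * (((∑ l ∈ (Finset.Icc 1 N).erase i, 1/(x l - x i))
              - ∑ l ∈ (Finset.Icc 1 N).erase j, 1/(x l - x j)) * (1/(x j - x i)^3)) := by
    intro j i
    simp only [ksRHS, gap, Nat.add_sub_cancel]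
    split_ifs <;> ring
  rw [Finset.sum_congr rfl fun j _ => Finset.sum_congr rfl fun i _ => hpoint j i]
  have hsplit : ∑ j ∈ Finset.Icc 1 N \ Finset.Icc a b, ∑ i ∈ Finset.Icc a b,
      (2 * (((if 1 < i then gap x i else 0) - (if i < N then gap x (i+1) else 0))
            * (1/(x j - x i)^3))
        + (-(2 * (((if 1 < j then gap x j else 0) - (if j < N then gap x (j+1) else 0))
            * (1/(x j - x i)^3))))
        + (4*χ*hN N) * (((∑ l ∈ (Finset.Icc 1 N).erase i, 1/(x l - x i))
              - ∑ l ∈ (Finset.Icc 1 N).erase j, 1/(x l - x j)) * (1/(x j - x i)^3)))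
      = (2 * ∑ j ∈ Finset.Icc 1 N \ Finset.Icc a b, ∑ i ∈ Finset.Icc a b,
          ((if 1 < i then gap x i else 0) - (if i < N then gap x (i+1) else 0))
            * (1/(x j - x i)^3))
        + (-(2 * ∑ j ∈ Finset.Icc 1 N \ Finset.Icc a b, ∑ i ∈ Finset.Icc a b,
          ((if 1 < j then gap x j else 0) - (if j < N then gap x (j+1) else 0))
            * (1/(x j - x i)^3)))
        + (4*χ*hN N) * ∑ j ∈ Finset.Icc 1 N \ Finset.Icc a b, ∑ i ∈ Finset.Icc a b,
          (((∑ l ∈ (Finset.Icc 1 N).erase i, 1/(x l - x i))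
              - ∑ l ∈ (Finset.Icc 1 N).erase j, 1/(x l - x j)) * (1/(x j - x i)^3)) := by
    rw [Finset.mul_sum, Finset.mul_sum, Finset.mul_sum, ← Finset.sum_neg_distrib,
      ← Finset.sum_add_distrib, ← Finset.sum_add_distrib]
    refine Finset.sum_congr rfl fun j _ => ?_
    rw [Finset.mul_sum, Finset.mul_sum, Finset.mul_sum, ← Finset.sum_neg_distrib,
      ← Finset.sum_add_distrib, ← Finset.sum_add_distrib]
  rw [hsplit]
  have hI := partI N a b x hN2 ha hb hab hmono
  have hO := partO N a b x hN2 ha hb hab hmono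
  have hW := partW N a b x ha hb hab hmono
  set H : ℝ := ∑ j ∈ Finset.Icc 1 N \ Finset.Icc a b, ∑ i ∈ Finset.Icc a b, 1/(x j - x i)^4
    with hH
  have hext : extPot N (Finset.Icc a b) 4 x = H := rfl
  rw [hext]
  set L : ℝ := (N:ℝ)^((1:ℝ)/4) with hLdef
  have hL : 0 ≤ L := Real.rpow_nonneg (Nat.cast_nonneg N) _
  have hH4 : 0 ≤ H := by
    rw [hH]
    exact Finset.sum_nonneg fun j _ => Finset.sum_nonneg fun i _ => by positivity
  have hh1 : 0 < hN N := by
    simp only [hN]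
    positivity
  have hh2 : hN N ≤ 1 := by
    simp only [hN]
    rw [div_le_one (by positivity)]
    have : (0:ℝ) ≤ (N:ℝ) := Nat.cast_nonneg N
    linarith
  have hWle : (4*χ*hN N) * ∑ j ∈ Finset.Icc 1 N \ Finset.Icc a b, ∑ i ∈ Finset.Icc a b,
        (((∑ l ∈ (Finset.Icc 1 N).erase i, 1/(x l - x i))
            - ∑ l ∈ (Finset.Icc 1 N).erase j, 1/(x l - x j)) * (1/(x j - x i)^3))
      ≤ (4*χ*hN N) * (2 * H) := by
    refine mul_le_mul_of_nonneg_left ?_ (by positivity)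
    exact hW
  have hWle2 : (4*χ*hN N) * (2 * H) ≤ 14 * (χ * H) := by
    have hint : 0 ≤ (1 - hN N) * χ * H :=
      mul_nonneg (mul_nonneg (by linarith) hχ.le) hH4
    nlinarith [mul_nonneg hχ.le hH4]
  have eA : (6 + 4*L) * H = 6*H + 4*(L*H) := by ring
  have eB : (12 + 14*χ + 4*L) * H = 12*H + 14*(χ*H) + 4*(L*H) := by ring
  rw [eA] at hI
  rw [eB]
  linarith

/-- `d/dt H_{IO,2} ≤ (12 + 14χ + 4N^{1/4}) H_{IO,4}`, and consequently
(since `H_{IO,4} ≤ H_{IO,2}²`) `d/dt H_{IO,2} ≤ (12 + 14χ + 4N^{1/4}) H_{IO,2}²`. -/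
theorem stmt6 (N : ℕ) (hN2 : 2 ≤ N) (χ T : ℝ) (hχ : 0 < χ)
    (X : ℕ → ℝ → ℝ) (hX : IsKSSol N χ T X)
    (a b : ℕ) (ha : 1 ≤ a) (hb : b ≤ N) (hab : a ≤ b)
    (t : ℝ) (ht : t ∈ Set.Ico (0 : ℝ) T) :
    deriv (fun s => extPot N (Finset.Icc a b) 2 (fun i => X i s)) t
        ≤ (12 + 14 * χ + 4 * (N : ℝ) ^ ((1 : ℝ) / 4)) *
          extPot N (Finset.Icc a b) 4 (fun i => X i t) ∧
      deriv (fun s => extPot N (Finset.Icc a b) 2 (fun i => X i s)) t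
        ≤ (12 + 14 * χ + 4 * (N : ℝ) ^ ((1 : ℝ) / 4)) *
          (extPot N (Finset.Icc a b) 2 (fun i => X i t)) ^ 2 := by
  obtain ⟨ht0, htT⟩ := ht
  have htmem : t ∈ Set.Ico (0:ℝ) T := ⟨ht0, htT⟩
  set x : ℕ → ℝ := fun i => X i t with hxdef
  -- monotonicity at time t
  have hmono : ∀ i j, 1 ≤ i → i < j → j ≤ N → x i < x j := by
    have key_s6 : ∀ j i, 1 ≤ i → i < j → j ≤ N → x i < x j := by
      intro j
      induction j with
      | zero => intro i _ h _; omega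
      | succ k ih =>
        intro i h1 hij hkN
        rcases eq_or_lt_of_le (Nat.lt_succ_iff.mp hij) with he | hlt
        · subst he
          exact hX.ordered t htmem i h1 (by omega)
        · exact lt_trans (ih i h1 hlt (by omega))
            (hX.ordered t htmem k (by omega) (by omega))
    exact fun i j h1 h2 h3 => key_s6 j i h1 h2 h3
  -- the derivative of H_{IO,2}
  have hD : HasDerivAt (fun s => extPot N (Finset.Icc a b) 2 (fun i => X i s))
      (∑ j ∈ Finset.Icc 1 N \ Finset.Icc a b, ∑ i ∈ Finset.Icc a b,
        (-2) * (ksRHS N χ x j - ksRHS N χ x i) / (x j - x i)^3) t := by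
    have hfun : (fun s => extPot N (Finset.Icc a b) 2 (fun i => X i s))
        = fun s => ∑ j ∈ Finset.Icc 1 N \ Finset.Icc a b, ∑ i ∈ Finset.Icc a b,
            1/(X j s - X i s)^2 := rfl
    rw [hfun]
    apply HasDerivAt.fun_sum
    intro j hj
    apply HasDerivAt.fun_sum
    intro i hi
    have hjS : j ∈ Finset.Icc 1 N := (Finset.mem_sdiff.mp hj).1
    have hj' := Finset.mem_Icc.mp hjS
    have hi' := Finset.mem_Icc.mp hi
    have hiS : i ∈ Finset.Icc 1 N := Finset.mem_Icc.mpr (by omega)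
    have hij : j ≠ i := fun h => (Finset.mem_sdiff.mp hj).2 (h ▸ hi)
    have hne : x j - x i ≠ 0 := by
      rcases Nat.lt_or_ge j i with h | h
      · have := hmono j i (by omega) h (by omega)
        intro hc; linarith
      · have hji : i < j := by omega
        have := hmono i j (by omega) hji (by omega)
        intro hc; linarith
    have hu : HasDerivAt (fun s => X j s - X i s) (ksRHS N χ x j - ksRHS N χ x i) t :=
      (hX.ode j hjS t htmem).sub (hX.ode i hiS t htmem)
    have h1 : HasDerivAt (fun s => ((X j s - X i s) ^ 2)⁻¹)
        (-(((2:ℕ):ℝ) * (X j t - X i t) ^ (2 - 1) * (ksRHS N χ x j - ksRHS N χ x i))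
          / ((X j t - X i t) ^ 2) ^ 2) t :=
      (hu.fun_pow 2).fun_inv (pow_ne_zero 2 hne)
    have h2 : HasDerivAt (fun s => 1/(X j s - X i s)^2)
        ((-2) * (ksRHS N χ x j - ksRHS N χ x i) / (x j - x i)^3) t := by
      simp only [one_div]
      convert h1 using 1
      have : x j - x i = X j t - X i t := rfl
      rw [← this]
      field_simp
      ring
    exact h2
  rw [hD.deriv]
  have hkey := key_s6 N a b χ hχ hN2 ha hb hab x hmono
  have hC : 0 ≤ 12 + 14 * χ + 4 * (N : ℝ) ^ ((1:ℝ)/4) := by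
    have : (0:ℝ) ≤ (N : ℝ) ^ ((1:ℝ)/4) := Real.rpow_nonneg (Nat.cast_nonneg N) _
    nlinarith
  have hsq : extPot N (Finset.Icc a b) 4 x ≤ (extPot N (Finset.Icc a b) 2 x)^2 := by
    have h44 : ∀ y : ℝ, 1/y^4 = (1/y^2)^2 := by
      intro y
      rw [one_div_pow, ← pow_mul]
    have step1 : ∀ j : ℕ, ∑ i ∈ Finset.Icc a b, 1/(x j - x i)^4
        ≤ (∑ i ∈ Finset.Icc a b, 1/(x j - x i)^2)^2 := by
      intro j
      calc ∑ i ∈ Finset.Icc a b, 1/(x j - x i)^4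
          = ∑ i ∈ Finset.Icc a b, (1/(x j - x i)^2)^2 :=
            Finset.sum_congr rfl fun i _ => h44 _
        _ ≤ (∑ i ∈ Finset.Icc a b, 1/(x j - x i)^2)^2 :=
            Finset.sum_sq_le_sq_sum_of_nonneg fun i _ => by positivity
    calc extPot N (Finset.Icc a b) 4 x
        ≤ ∑ j ∈ Finset.Icc 1 N \ Finset.Icc a b,
            (∑ i ∈ Finset.Icc a b, 1/(x j - x i)^2)^2 :=
          Finset.sum_le_sum fun j _ => step1 j
      _ ≤ (∑ j ∈ Finset.Icc 1 N \ Finset.Icc a b,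
            ∑ i ∈ Finset.Icc a b, 1/(x j - x i)^2)^2 :=
          Finset.sum_sq_le_sq_sum_of_nonneg fun j _ =>
            Finset.sum_nonneg fun i _ => by positivity
      _ = (extPot N (Finset.Icc a b) 2 x)^2 := rfl
  constructor
  · exact hkey
  · exact le_trans hkey (mul_le_mul_of_nonneg_left hsq hC)
end
end

section
/- Let Y be the parabolically rescaled solution associated with a weak blow-up set I = [l, l+k−1] of k particles. Then for all indices q < p with q, p ∈ I and all τ ≥ 0: |(1/2) d/dτ P²_{q,p}(τ) − α_{q,p} − α P²_{q,p}(τ)| ≤ (2 + 2χ/√N) √(P²_{q,p}(τ) · 𝓗_{q,p,2}(τ)), where α_{q,p} = (p−q)(1 − χ(p−q+1)/(N+1)). -/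
open Filter

noncomputable section

/-! ### Auxiliary lemmas for stmt8 -/

lemma one_div_div_sub' (R a b : ℝ) : 1 / (a / R - b / R) = R * (1 / (a - b)) := by
  rcases eq_or_ne a b with h | h
  · simp [h]
  · rw [div_sub_div_same, one_div_div, mul_one_div]

lemma ksRHS_scale (N : ℕ) (χ R b : ℝ) (x : ℕ → ℝ) (i : ℕ) :
    ksRHS N χ (fun j => (x j - b) / R) i = R * ksRHS N χ x i := by
  unfold ksRHS
  have key : ∀ a c : ℝ, 1 / ((a - b) / R - (c - b) / R) = R * (1 / (a - c)) := by
    intro a c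
    rw [one_div_div_sub', sub_sub_sub_cancel_right]
  rw [mul_add, mul_add]
  congr 1
  · congr 1
    · split_ifs with h
      · rw [key, mul_neg]
      · ring
    · split_ifs with h
      · rw [key]
      · ring
  · rw [Finset.mul_sum, Finset.mul_sum, Finset.mul_sum]
    apply Finset.sum_congr rfl
    intro j _
    rw [key]; ring

lemma pair_sum_s8 (s : Finset ℕ) (y : ℕ → ℝ) (m : ℝ)
    (hinj : ∀ i ∈ s, ∀ j ∈ s, i ≠ j → y i ≠ y j) :
    ∑ i ∈ s, ∑ j ∈ s, (y i - m) * (1 / (y j - y i))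
      = -((s.card : ℝ) * ((s.card : ℝ) - 1)) / 2 := by
  set S := ∑ i ∈ s, ∑ j ∈ s, (y i - m) * (1 / (y j - y i)) with hS
  have hswap : S = ∑ i ∈ s, ∑ j ∈ s, (y j - m) * (1 / (y i - y j)) := Finset.sum_comm
  have h2 : S + S = ∑ i ∈ s, ∑ j ∈ s,
      ((y i - m) * (1 / (y j - y i)) + (y j - m) * (1 / (y i - y j))) := by
    nth_rewrite 2 [hswap]
    rw [hS, ← Finset.sum_add_distrib]
    exact Finset.sum_congr rfl fun i _ => (Finset.sum_add_distrib).symm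
  have h3 : ∀ i ∈ s, ∀ j ∈ s,
      (y i - m) * (1 / (y j - y i)) + (y j - m) * (1 / (y i - y j))
        = if j = i then 0 else -1 := by
    intro i hi j hj
    rcases eq_or_ne j i with h | h
    · simp [h]
    · have hne : y j - y i ≠ 0 := sub_ne_zero.2 (hinj j hj i hi h)
      have hne' : y i - y j ≠ 0 := sub_ne_zero.2 (hinj i hi j hj (Ne.symm h))
      rw [if_neg h]
      field_simp
      ring
  have h4 : S + S = ∑ i ∈ s, ∑ j ∈ s, (if j = i then (0:ℝ) else -1) := by
    rw [h2]; exact Finset.sum_congr rfl fun i hi => Finset.sum_congr rfl fun j hj => h3 i hi j hj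
  have h5 : ∀ i ∈ s, ∑ j ∈ s, (if j = i then (0:ℝ) else -1) = -((s.card : ℝ) - 1) := by
    intro i hi
    have : (∑ j ∈ s, if j = i then (0:ℝ) else -1)
        = (∑ j ∈ s, (-1:ℝ)) + (∑ j ∈ s, if j = i then (1:ℝ) else 0) := by
      rw [← Finset.sum_add_distrib]
      exact Finset.sum_congr rfl fun j _ => by split_ifs <;> ring
    rw [this, Finset.sum_const, Finset.sum_ite_eq' s i (fun _ => (1:ℝ)), if_pos hi]
    simp; ring
  have h6 : S + S = -((s.card : ℝ) * ((s.card : ℝ) - 1)) := by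
    rw [h4, Finset.sum_congr rfl h5, Finset.sum_const]
    simp; ring
  linarith

lemma sum_sub_mean (s : Finset ℕ) (hs : s.Nonempty) (y : ℕ → ℝ) :
    ∑ i ∈ s, (y i - meanOn s y) = 0 := by
  have hc : (s.card : ℝ) ≠ 0 := Nat.cast_ne_zero.2 (Finset.card_ne_zero_of_mem hs.choose_spec)
  rw [Finset.sum_sub_distrib, Finset.sum_const, meanOn]
  field_simp
  rw [nsmul_eq_mul, mul_div_cancel₀ _ hc, sub_self]

lemma abs_le_sqrt_var (s : Finset ℕ) (y : ℕ → ℝ) (i : ℕ) (hi : i ∈ s) :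
    |y i - meanOn s y| ≤ Real.sqrt (var2 s y) := by
  rw [← Real.sqrt_sq_eq_abs]
  apply Real.sqrt_le_sqrt
  exact Finset.single_le_sum (f := fun j => (y j - meanOn s y)^2) (fun j _ => sq_nonneg _) hi

lemma Yderiv (N : ℕ) (χ T α Xbar : ℝ) (hT : 0 < T) (hα : 0 < α)
    (X : ℕ → ℝ → ℝ) (hX : IsKSSol N χ T X)
    (Y : ℕ → ℝ → ℝ)
    (hY : ∀ i τ, Y i τ = (X i (T * (1 - Real.exp (-2 * α * τ))) - Xbar) /
        (Real.sqrt (2 * α * T) * Real.exp (-α * τ)))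
    (τ : ℝ) (hτ : 0 ≤ τ) (i : ℕ) (hi : i ∈ Finset.Icc 1 N) :
    HasDerivAt (fun σ => Y i σ) (ksRHS N χ (fun j => Y j τ) i + α * Y i τ) τ := by
  set c := Real.sqrt (2 * α * T) with hcdef
  have hc : 0 < c := Real.sqrt_pos.2 (by positivity)
  have hc2 : c ^ 2 = 2 * α * T := Real.sq_sqrt (by positivity)
  set g : ℝ → ℝ := fun σ => T * (1 - Real.exp (-2 * α * σ)) with hgdef
  have hg : HasDerivAt g (T * (2 * α * Real.exp (-2 * α * τ))) τ := by
    have h1 : HasDerivAt (fun σ : ℝ => -2 * α * σ) (-2 * α) τ := by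
      simpa using (hasDerivAt_id τ).const_mul (-2 * α)
    have h2 : HasDerivAt (fun σ : ℝ => Real.exp (-2 * α * σ))
        (Real.exp (-2 * α * τ) * (-2 * α)) τ := (Real.hasDerivAt_exp _).comp τ h1
    have h3 := (h2.const_sub 1).const_mul T
    exact h3.congr_deriv (by ring)
  have htmem : g τ ∈ Set.Ico (0 : ℝ) T := by
    constructor
    · show (0:ℝ) ≤ T * (1 - Real.exp (-2 * α * τ))
      have : Real.exp (-2 * α * τ) ≤ 1 := Real.exp_le_one_iff.2 (by nlinarith)
      nlinarith
    · show T * (1 - Real.exp (-2 * α * τ)) < T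
      have h0 : 0 < Real.exp (-2 * α * τ) := Real.exp_pos _
      nlinarith [mul_pos hT h0]
  have hXd := hX.ode i hi (g τ) htmem
  set v := ksRHS N χ (fun j => X j (g τ)) i with hvdef
  have hXg : HasDerivAt (fun σ => X i (g σ)) (v * (T * (2 * α * Real.exp (-2 * α * τ)))) τ :=
    hXd.comp τ hg
  have hexp : HasDerivAt (fun σ : ℝ => Real.exp (α * σ)) (Real.exp (α * τ) * α) τ :=
    (Real.hasDerivAt_exp _).comp τ (by simpa using (hasDerivAt_id τ).const_mul α)
  have hF : HasDerivAt (fun σ => (X i (g σ) - Xbar) * (Real.exp (α * σ) / c))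
      ((v * (T * (2 * α * Real.exp (-2 * α * τ)))) * (Real.exp (α * τ) / c)
        + (X i (g τ) - Xbar) * (Real.exp (α * τ) * α / c)) τ := by
    exact (hXg.sub_const Xbar).mul (hexp.div_const c)
  have hfun : (fun σ => Y i σ) = fun σ => (X i (g σ) - Xbar) * (Real.exp (α * σ) / c) := by
    funext σ
    rw [hY i σ]
    show (X i (g σ) - Xbar) / (c * Real.exp (-α * σ)) = _
    rw [neg_mul, Real.exp_neg]
    rw [div_eq_mul_inv, mul_inv, inv_inv]
    ring
  rw [hfun]
  convert hF using 1
  have hYτ : Y i τ = (X i (g τ) - Xbar) * (Real.exp (α * τ) / c) := congrFun hfun τ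
  have hYfun : (fun j => Y j τ) = fun j => (X j (g τ) - Xbar) / (c * Real.exp (-α * τ)) := by
    funext j; exact hY j τ
  rw [hYfun, ksRHS_scale, ← hvdef]
  set E := Real.exp (-α * τ) with hE
  have hEpos : 0 < E := Real.exp_pos _
  have hE1 : Real.exp (α * τ) = E⁻¹ := by
    rw [hE, ← Real.exp_neg]
    congr 1
    ring
  have hE2 : Real.exp (-2 * α * τ) = E ^ 2 := by
    rw [hE, sq, ← Real.exp_add]
    ring_nf
  have hTc : T = c ^ 2 / (2 * α) := by
    rw [hc2]; field_simp
  rw [hYτ, hE1, hE2, hTc]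
  have hcne : c ≠ 0 := ne_of_gt hc
  have hEne : E ≠ 0 := ne_of_gt hEpos
  field_simp
set_option maxHeartbeats 1600000 in
/-- evolution estimate for the variance `P²_{q,p}` of the parabolically
rescaled solution `Y_i(τ(t)) = (X_i(t) - X̄)/√(2α(T-t))` associated with a weak blow-up
set `I = [l, l+k-1]`.  Here `t(τ) = T(1 - e^{-2ατ})` and `√(2α(T-t(τ))) = √(2αT) e^{-ατ}`. -/
theorem stmt8 (N k : ℕ) (hN2 : 2 ≤ N) (hk : 2 ≤ k) (hkN : k ≤ N)
    (χ T : ℝ) (hχ1 : ((N : ℝ) + 1) / k < χ) (hχ2 : χ < ((N : ℝ) + 1) / ((k : ℝ) - 1))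
    (hT : 0 < T)
    (X : ℕ → ℝ → ℝ) (hX : IsKSSol N χ T X)
    (l : ℕ) (hl : 1 ≤ l) (hlk : l + k - 1 ≤ N)
    (hI : IsWeakBlowup N X T (Finset.Icc l (l + k - 1)))
    (α : ℝ) (hα : α = ((k : ℝ) - 1) * (χ * k / ((N : ℝ) + 1) - 1))
    (Xbar : ℝ)
    (hXbar : Filter.Tendsto (fun t => (∑ i ∈ Finset.Icc l (l + k - 1), X i t) / (k : ℝ))
      (nhdsWithin T (Set.Iio T)) (nhds Xbar))
    (Y : ℕ → ℝ → ℝ)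
    (hY : ∀ i τ, Y i τ =
      (X i (T * (1 - Real.exp (-2 * α * τ))) - Xbar) /
        (Real.sqrt (2 * α * T) * Real.exp (-α * τ)))
    (q p : ℕ) (hq : q ∈ Finset.Icc l (l + k - 1)) (hp : p ∈ Finset.Icc l (l + k - 1))
    (hqp : q < p) (τ : ℝ) (hτ : 0 ≤ τ) :
    |(1 / 2) * deriv (fun σ => var2 (Finset.Icc q p) (fun i => Y i σ)) τ
        - ((p : ℝ) - q) * (1 - χ * ((p : ℝ) - q + 1) / ((N : ℝ) + 1))
        - α * var2 (Finset.Icc q p) (fun i => Y i τ)|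
      ≤ (2 + 2 * χ / Real.sqrt N) *
        Real.sqrt (var2 (Finset.Icc q p) (fun i => Y i τ)
          * extPot N (Finset.Icc q p) 2 (fun i => Y i τ)) := by
  classical
  -- basic index facts
  simp only [Finset.mem_Icc] at hq hp
  have hq1 : 1 ≤ q := le_trans hl hq.1
  have hpN : p ≤ N := le_trans hp.2 hlk
  have hsub : Finset.Icc q p ⊆ Finset.Icc 1 N := by
    intro i hi
    simp only [Finset.mem_Icc] at hi ⊢
    omega
  set s : Finset ℕ := Finset.Icc q p with hsdef
  have hsne : s.Nonempty := Finset.nonempty_Icc.2 (le_of_lt hqp)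
  have hcards : s.card = p + 1 - q := Nat.card_Icc q p
  have hcard : (s.card : ℝ) = (p : ℝ) - q + 1 := by
    rw [hcards]
    have hle : q ≤ p + 1 := by omega
    rw [Nat.cast_sub hle]
    push_cast
    ring
  have hNpos : (0:ℝ) < (N:ℝ) + 1 := by positivity
  have hkpos : (0:ℝ) < (k:ℝ) := by positivity
  have hχpos : 0 < χ := lt_trans (by positivity) hχ1
  have hNk : (N:ℝ) + 1 < χ * k := by rwa [div_lt_iff₀ hkpos] at hχ1
  have hαpos : 0 < α := by
    rw [hα]
    apply mul_pos
    · have : (2:ℝ) ≤ (k:ℝ) := by exact_mod_cast hk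
      linarith
    · rw [sub_pos, lt_div_iff₀ hNpos]
      linarith
  set y : ℕ → ℝ := fun i => Y i τ with hydef
  set m : ℝ := meanOn s y with hmdef
  -- ordering of the rescaled particles
  have hτmem : T * (1 - Real.exp (-2 * α * τ)) ∈ Set.Ico (0:ℝ) T := by
    constructor
    · have : Real.exp (-2 * α * τ) ≤ 1 := Real.exp_le_one_iff.2 (by nlinarith)
      nlinarith
    · have h0 : 0 < Real.exp (-2 * α * τ) := Real.exp_pos _
      nlinarith [mul_pos hT h0]
  have hXord : ∀ i j, 1 ≤ i → i < j → j ≤ N →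
      X i (T * (1 - Real.exp (-2 * α * τ))) < X j (T * (1 - Real.exp (-2 * α * τ))) := by
    intro i j hi hij hjN
    set t := T * (1 - Real.exp (-2 * α * τ))
    clear_value t
    induction j with
    | zero => omega
    | succ j ih =>
      rcases Nat.lt_or_ge i j with h | h
      · exact lt_trans (ih h (by omega)) (hX.ordered t hτmem j (by omega) (by omega))
      · have : i = j := by omega
        subst this
        exact hX.ordered t hτmem i hi (by omega)
  have hYord : ∀ i j, 1 ≤ i → i < j → j ≤ N → y i < y j := by
    intro i j hi hij hjN
    rw [hydef]
    simp only
    rw [hY i τ, hY j τ]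
    have hR : 0 < Real.sqrt (2 * α * T) * Real.exp (-α * τ) := by
      apply mul_pos (Real.sqrt_pos.2 (by positivity)) (Real.exp_pos _)
    have hx := hXord i j hi hij hjN
    exact div_lt_div_of_pos_right (by linarith) hR
  have hyne : ∀ i ∈ Finset.Icc 1 N, ∀ j ∈ Finset.Icc 1 N, i ≠ j → y i ≠ y j := by
    intro i hi j hj hij
    simp only [Finset.mem_Icc] at hi hj
    rcases Nat.lt_or_ge i j with h | h
    · exact ne_of_lt (hYord i j hi.1 h hj.2)
    · have : j < i := by omega
      exact (ne_of_lt (hYord j i hj.1 this hi.2)).symm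
  -- derivative of the rescaled particles
  set D : ℕ → ℝ := fun i => ksRHS N χ y i + α * y i with hDdef
  have hD : ∀ i ∈ Finset.Icc 1 N, HasDerivAt (fun σ => Y i σ) (D i) τ := by
    intro i hi
    exact Yderiv N χ T α Xbar hT hαpos X hX Y hY τ hτ i hi
  set Dm : ℝ := (∑ j ∈ s, D j) / (s.card : ℝ) with hDmdef
  -- derivative of the variance
  have hderiv : deriv (fun σ => var2 s (fun i => Y i σ)) τ
      = ∑ i ∈ s, 2 * (y i - m) * (D i - Dm) := by
    have hmeanD : HasDerivAt (fun σ => (∑ j ∈ s, Y j σ) / (s.card : ℝ)) Dm τ := by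
      rw [hDmdef]
      exact (HasDerivAt.fun_sum (fun j hj => hD j (hsub hj))).div_const _
    have htot : HasDerivAt (fun σ => ∑ i ∈ s, (Y i σ - (∑ j ∈ s, Y j σ) / (s.card : ℝ))^2)
        (∑ i ∈ s, (2:ℕ) * (Y i τ - (∑ j ∈ s, Y j τ) / (s.card : ℝ))^(2-1) * (D i - Dm)) τ :=
      HasDerivAt.fun_sum (fun i hi => ((hD i (hsub hi)).fun_sub hmeanD).fun_pow 2)
    have hfun : (fun σ => var2 s (fun i => Y i σ))
        = fun σ => ∑ i ∈ s, (Y i σ - (∑ j ∈ s, Y j σ) / (s.card : ℝ))^2 := by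
      funext σ; simp only [var2, meanOn]
    rw [hfun, htot.deriv]
    apply Finset.sum_congr rfl
    intro i hi
    have hmm : (∑ j ∈ s, Y j τ) / (s.card : ℝ) = m := rfl
    rw [hmm]
    norm_num
    exact Or.inl rfl
  have hsum0 : ∑ i ∈ s, (y i - m) = 0 := sum_sub_mean s hsne y
  have hS : (1/2) * deriv (fun σ => var2 s (fun i => Y i σ)) τ
      = ∑ i ∈ s, (y i - m) * D i := by
    rw [hderiv]
    have h1 : ∑ i ∈ s, 2 * (y i - m) * (D i - Dm)
        = 2 * (∑ i ∈ s, (y i - m) * D i) - 2 * Dm * (∑ i ∈ s, (y i - m)) := by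
      rw [Finset.mul_sum, Finset.mul_sum, ← Finset.sum_sub_distrib]
      exact Finset.sum_congr rfl fun i _ => by ring
    rw [h1, hsum0]
    ring
  -- splitting of the sum
  set B1 : ℝ := if p < N then -((y p - m) * (1 / (y (p+1) - y p))) else 0 with hB1def
  set B2 : ℝ := if 1 < q then (y q - m) * (1 / (y q - y (q-1))) else 0 with hB2def
  set E : ℝ := ∑ i ∈ s, (y i - m) * ∑ j ∈ (Finset.Icc 1 N) \ s, 1 / (y j - y i) with hEdef
  have hyne' : ∀ i ∈ s, ∀ j ∈ s, i ≠ j → y i ≠ y j :=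
    fun i hi j hj => hyne i (hsub hi) j (hsub hj)
  have hstop : s = insert p (Finset.Icc q (p-1)) := by
    ext x; simp only [hsdef, Finset.mem_Icc, Finset.mem_insert]; omega
  have hptop : p ∉ Finset.Icc q (p-1) := by simp only [Finset.mem_Icc]; omega
  have hsbot : s = insert q (Finset.Icc (q+1) p) := by
    ext x; simp only [hsdef, Finset.mem_Icc, Finset.mem_insert]; omega
  have hqbot : q ∉ Finset.Icc (q+1) p := by simp only [Finset.mem_Icc]; omega
  have hSN1 : ∑ i ∈ s, (y i - m) * (if i < N then -(1 / (y (i+1) - y i)) else 0)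
      = B1 + ∑ i ∈ Finset.Icc q (p-1), -((y i - m) * (1 / (y (i+1) - y i))) := by
    rw [hstop, Finset.sum_insert hptop]
    congr 1
    · rw [hB1def]; split_ifs with h <;> ring
    · apply Finset.sum_congr rfl
      intro i hi
      simp only [Finset.mem_Icc] at hi
      rw [if_pos (by omega)]
      ring
  have hSN2 : ∑ i ∈ s, (y i - m) * (if 1 < i then 1 / (y i - y (i-1)) else 0)
      = B2 + ∑ i ∈ Finset.Icc q (p-1), (y (i+1) - m) * (1 / (y (i+1) - y i)) := by
    rw [hsbot, Finset.sum_insert hqbot]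
    congr 1
    · rw [hB2def]; split_ifs with h <;> ring
    · have hmap : Finset.Icc (q+1) p = Finset.map (addRightEmbedding 1) (Finset.Icc q (p-1)) := by
        rw [Finset.map_add_right_Icc]
        congr 1
        omega
      rw [hmap, Finset.sum_map]
      apply Finset.sum_congr rfl
      intro i hi
      simp only [Finset.mem_Icc] at hi
      simp only [addRightEmbedding_apply]
      rw [if_pos (by omega)]
      have : i + 1 - 1 = i := by omega
      rw [this]
  have htel2 : (∑ i ∈ Finset.Icc q (p-1), -((y i - m) * (1 / (y (i+1) - y i))))
      + (∑ i ∈ Finset.Icc q (p-1), (y (i+1) - m) * (1 / (y (i+1) - y i))) = (p:ℝ) - q := by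
    rw [← Finset.sum_add_distrib]
    have hone : ∀ i ∈ Finset.Icc q (p-1),
        -((y i - m) * (1 / (y (i+1) - y i))) + (y (i+1) - m) * (1 / (y (i+1) - y i)) = 1 := by
      intro i hi
      simp only [Finset.mem_Icc] at hi
      have hlt : y i < y (i+1) := hYord i (i+1) (by omega) (by omega) (by omega)
      have hne : y (i+1) - y i ≠ 0 := ne_of_gt (by linarith)
      field_simp
      ring
    rw [Finset.sum_congr rfl hone, Finset.sum_const, Nat.card_Icc]
    have h1 : p - 1 + 1 - q = p - q := by omega
    rw [h1, nsmul_eq_mul, Nat.cast_sub (le_of_lt hqp)]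
    ring
  have hSM : ∑ i ∈ s, (y i - m) * ∑ j ∈ (Finset.Icc 1 N).erase i, 1 / (y j - y i)
      = E + (-(((s.card:ℝ)) * ((s.card:ℝ) - 1)) / 2) := by
    have h1 : ∀ i ∈ s, (y i - m) * ∑ j ∈ (Finset.Icc 1 N).erase i, 1 / (y j - y i)
        = (y i - m) * ((∑ j ∈ (Finset.Icc 1 N) \ s, 1 / (y j - y i))
            + ∑ j ∈ s, 1 / (y j - y i)) := by
      intro i hi
      rw [Finset.sum_erase _ (by simp), Finset.sum_sdiff hsub]
    rw [Finset.sum_congr rfl h1]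
    have h2 : ∑ i ∈ s, (y i - m) * ((∑ j ∈ (Finset.Icc 1 N) \ s, 1 / (y j - y i))
          + ∑ j ∈ s, 1 / (y j - y i))
        = E + ∑ i ∈ s, ∑ j ∈ s, (y i - m) * (1 / (y j - y i)) := by
      rw [hEdef, ← Finset.sum_add_distrib]
      apply Finset.sum_congr rfl
      intro i hi
      rw [mul_add]
      congr 1
      exact Finset.mul_sum _ _ _
    rw [h2, pair_sum_s8 s y m hyne']
  have hSY : ∑ i ∈ s, (y i - m) * y i = var2 s y := by
    have h1 : ∀ i ∈ s, (y i - m) * y i = (y i - m)^2 + m * (y i - m) := fun i _ => by ring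
    rw [Finset.sum_congr rfl h1, Finset.sum_add_distrib, ← Finset.mul_sum, hsum0, var2, ← hmdef]
    ring
  have hC : (2 * χ * hN N) * (-(((s.card:ℝ)) * ((s.card:ℝ) - 1)) / 2)
      = -(χ * ((p:ℝ) - q) * ((p:ℝ) - q + 1) / ((N:ℝ) + 1)) := by
    rw [hcard, hN]
    field_simp
    ring
  have hsplit : ∑ i ∈ s, (y i - m) * D i
      = ((p:ℝ) - q) + B1 + B2 + (2 * χ * hN N) * E
        - χ * ((p:ℝ) - q) * ((p:ℝ) - q + 1) / ((N:ℝ) + 1) + α * var2 s y := by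
    have hexpand : ∑ i ∈ s, (y i - m) * D i
        = (∑ i ∈ s, (y i - m) * (if i < N then -(1 / (y (i+1) - y i)) else 0))
          + (∑ i ∈ s, (y i - m) * (if 1 < i then 1 / (y i - y (i-1)) else 0))
          + (2 * χ * hN N) * (∑ i ∈ s, (y i - m) * ∑ j ∈ (Finset.Icc 1 N).erase i, 1 / (y j - y i))
          + α * (∑ i ∈ s, (y i - m) * y i) := by
      rw [Finset.mul_sum, Finset.mul_sum, ← Finset.sum_add_distrib, ← Finset.sum_add_distrib,
        ← Finset.sum_add_distrib]
      apply Finset.sum_congr rfl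
      intro i hi
      simp only [hDdef, ksRHS]
      ring
    rw [hexpand, hSN1, hSN2, hSM, hSY, mul_add, hC]
    linarith [htel2]
  -- bounds
  have hvar_nonneg : 0 ≤ var2 s y := Finset.sum_nonneg fun i _ => sq_nonneg _
  have hext_nonneg : 0 ≤ extPot N s 2 y := by
    apply Finset.sum_nonneg
    intro j _
    apply Finset.sum_nonneg
    intro i _
    positivity
  have hPH : Real.sqrt (var2 s y) * Real.sqrt (extPot N s 2 y)
      = Real.sqrt (var2 s y * extPot N s 2 y) := (Real.sqrt_mul hvar_nonneg _).symm
  have hsingle : ∀ j ∈ (Finset.Icc 1 N) \ s, ∀ i ∈ s, 1 / (y j - y i)^2 ≤ extPot N s 2 y := by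
    intro j hj i hi
    unfold extPot
    calc 1 / (y j - y i)^2 ≤ ∑ i' ∈ s, 1 / (y j - y i')^2 :=
          Finset.single_le_sum (f := fun i' => 1 / (y j - y i')^2) (fun i' _ => by positivity) hi
      _ ≤ ∑ j' ∈ (Finset.Icc 1 N) \ s, ∑ i' ∈ s, 1 / (y j' - y i')^2 :=
          Finset.single_le_sum (f := fun j' => ∑ i' ∈ s, 1 / (y j' - y i')^2)
            (fun j' _ => Finset.sum_nonneg fun i' _ => by positivity) hj
  have habs_le : ∀ j ∈ (Finset.Icc 1 N) \ s, ∀ i ∈ s,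
      |1 / (y j - y i)| ≤ Real.sqrt (extPot N s 2 y) := by
    intro j hj i hi
    rw [← Real.sqrt_sq_eq_abs]
    apply Real.sqrt_le_sqrt
    rw [div_pow, one_pow]
    exact hsingle j hj i hi
  have hmem_p : p ∈ s := by simp only [hsdef, Finset.mem_Icc]; omega
  have hmem_q : q ∈ s := by simp only [hsdef, Finset.mem_Icc]; omega
  have hB1bound : |B1| ≤ Real.sqrt (var2 s y * extPot N s 2 y) := by
    rw [hB1def, ← hPH]
    split_ifs with h
    · rw [abs_neg, abs_mul]
      apply mul_le_mul
      · rw [hmdef]; exact abs_le_sqrt_var s y p hmem_p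
      · have hj : p + 1 ∈ (Finset.Icc 1 N) \ s := by
          simp only [Finset.mem_sdiff, Finset.mem_Icc, hsdef]; omega
        exact habs_le (p+1) hj p hmem_p
      · exact abs_nonneg _
      · exact Real.sqrt_nonneg _
    · simp only [abs_zero]
      positivity
  have hB2bound : |B2| ≤ Real.sqrt (var2 s y * extPot N s 2 y) := by
    rw [hB2def, ← hPH]
    split_ifs with h
    · rw [abs_mul]
      apply mul_le_mul
      · rw [hmdef]; exact abs_le_sqrt_var s y q hmem_q
      · have hj : q - 1 ∈ (Finset.Icc 1 N) \ s := by
          simp only [Finset.mem_sdiff, Finset.mem_Icc, hsdef]; omega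
        have heq : |1 / (y q - y (q-1))| = |1 / (y (q-1) - y q)| := by
          rw [← abs_neg (1 / (y (q-1) - y q)), ← one_div_neg_eq_neg_one_div, neg_sub]
        rw [heq]
        exact habs_le (q-1) hj q hmem_q
      · exact abs_nonneg _
      · exact Real.sqrt_nonneg _
    · simp only [abs_zero]
      positivity
  have hEbound : |(2 * χ * hN N) * E|
      ≤ (2 * χ / Real.sqrt N) * Real.sqrt (var2 s y * extPot N s 2 y) := by
    have hNR : (0:ℝ) < (N:ℝ) := by
      have : (2:ℝ) ≤ (N:ℝ) := by exact_mod_cast hN2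
      linarith
    have hsqrtN : 0 < Real.sqrt N := Real.sqrt_pos.2 hNR
    have hcardO : ((((Finset.Icc 1 N) \ s).card : ℝ)) ≤ (N:ℝ) := by
      have h1 : ((Finset.Icc 1 N) \ s).card ≤ (Finset.Icc 1 N).card :=
        Finset.card_le_card (Finset.sdiff_subset)
      have h2 : (Finset.Icc 1 N).card = N := by rw [Nat.card_Icc]; omega
      exact_mod_cast h1.trans_eq h2
    have hgsq : ∀ i ∈ s, (∑ j ∈ (Finset.Icc 1 N) \ s, 1 / (y j - y i))^2
        ≤ (N:ℝ) * ∑ j ∈ (Finset.Icc 1 N) \ s, 1 / (y j - y i)^2 := by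
      intro i hi
      have hcs := Finset.sum_mul_sq_le_sq_mul_sq ((Finset.Icc 1 N) \ s)
        (fun _ => (1:ℝ)) (fun j => 1 / (y j - y i))
      simp only [one_mul, one_pow, Finset.sum_const, nsmul_eq_mul, mul_one] at hcs
      calc (∑ j ∈ (Finset.Icc 1 N) \ s, 1 / (y j - y i))^2
          ≤ ((((Finset.Icc 1 N) \ s).card : ℝ)) * ∑ j ∈ (Finset.Icc 1 N) \ s, (1 / (y j - y i))^2 := hcs
        _ ≤ (N:ℝ) * ∑ j ∈ (Finset.Icc 1 N) \ s, 1 / (y j - y i)^2 := by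
            apply mul_le_mul hcardO _ (Finset.sum_nonneg fun j _ => by positivity) (le_of_lt hNR)
            apply le_of_eq
            exact Finset.sum_congr rfl fun j _ => by rw [div_pow, one_pow]
    have hext_swap : ∑ i ∈ s, ∑ j ∈ (Finset.Icc 1 N) \ s, 1 / (y j - y i)^2
        = extPot N s 2 y := Finset.sum_comm
    have hEsq : E^2 ≤ var2 s y * ((N:ℝ) * extPot N s 2 y) := by
      rw [hEdef]
      calc (∑ i ∈ s, (y i - m) * ∑ j ∈ (Finset.Icc 1 N) \ s, 1 / (y j - y i))^2
          ≤ (∑ i ∈ s, (y i - m)^2) *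
              ∑ i ∈ s, (∑ j ∈ (Finset.Icc 1 N) \ s, 1 / (y j - y i))^2 :=
            Finset.sum_mul_sq_le_sq_mul_sq s _ _
        _ ≤ var2 s y * ((N:ℝ) * extPot N s 2 y) := by
            apply mul_le_mul
            · apply le_of_eq
              rw [var2, ← hmdef]
            · calc ∑ i ∈ s, (∑ j ∈ (Finset.Icc 1 N) \ s, 1 / (y j - y i))^2
                  ≤ ∑ i ∈ s, (N:ℝ) * ∑ j ∈ (Finset.Icc 1 N) \ s, 1 / (y j - y i)^2 :=
                    Finset.sum_le_sum hgsq
                _ = (N:ℝ) * extPot N s 2 y := by rw [← Finset.mul_sum, hext_swap]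
            · exact Finset.sum_nonneg fun i _ => sq_nonneg _
            · exact hvar_nonneg
    have hEabs : |E| ≤ Real.sqrt N * Real.sqrt (var2 s y * extPot N s 2 y) := by
      rw [← Real.sqrt_sq_eq_abs]
      calc Real.sqrt (E^2) ≤ Real.sqrt (var2 s y * ((N:ℝ) * extPot N s 2 y)) :=
            Real.sqrt_le_sqrt hEsq
        _ = Real.sqrt N * Real.sqrt (var2 s y * extPot N s 2 y) := by
            rw [show var2 s y * ((N:ℝ) * extPot N s 2 y)
                = (N:ℝ) * (var2 s y * extPot N s 2 y) by ring]
            rw [Real.sqrt_mul (le_of_lt hNR)]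
    rw [abs_mul]
    have hconst : |2 * χ * hN N| = 2 * χ / ((N:ℝ) + 1) := by
      rw [hN, abs_of_nonneg (by positivity)]
      ring
    rw [hconst]
    calc 2 * χ / ((N:ℝ) + 1) * |E|
        ≤ 2 * χ / ((N:ℝ) + 1) * (Real.sqrt N * Real.sqrt (var2 s y * extPot N s 2 y)) := by
          apply mul_le_mul_of_nonneg_left hEabs (by positivity)
      _ ≤ 2 * χ / Real.sqrt N * Real.sqrt (var2 s y * extPot N s 2 y) := by
          rw [show 2 * χ / ((N:ℝ) + 1) * (Real.sqrt N * Real.sqrt (var2 s y * extPot N s 2 y))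
              = (2 * χ * Real.sqrt N / ((N:ℝ) + 1)) * Real.sqrt (var2 s y * extPot N s 2 y) by ring]
          apply mul_le_mul_of_nonneg_right _ (Real.sqrt_nonneg _)
          rw [div_le_div_iff₀ (by positivity) hsqrtN]
          have hss : Real.sqrt N * Real.sqrt N = (N:ℝ) := Real.mul_self_sqrt (le_of_lt hNR)
          calc 2 * χ * Real.sqrt N * Real.sqrt N = 2 * χ * (N:ℝ) := by
                rw [mul_assoc, hss]
            _ ≤ 2 * χ * ((N:ℝ) + 1) := by
                apply mul_le_mul_of_nonneg_left (by linarith) (by positivity)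
  -- conclusion
  rw [hS, hsplit]
  have goal_eq : ((p:ℝ) - q) + B1 + B2 + (2 * χ * hN N) * E
        - χ * ((p:ℝ) - q) * ((p:ℝ) - q + 1) / ((N:ℝ) + 1) + α * var2 s y
        - ((p:ℝ) - q) * (1 - χ * ((p:ℝ) - q + 1) / ((N:ℝ) + 1))
        - α * var2 s y
      = B1 + B2 + (2 * χ * hN N) * E := by
    ring
  rw [goal_eq]
  calc |B1 + B2 + (2 * χ * hN N) * E| ≤ |B1 + B2| + |(2 * χ * hN N) * E| := abs_add_le _ _
    _ ≤ |B1| + |B2| + |(2 * χ * hN N) * E| := by linarith [abs_add_le B1 B2]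
    _ ≤ (2 + 2 * χ / Real.sqrt N) * Real.sqrt (var2 s y * extPot N s 2 y) := by
        linarith [hB1bound, hB2bound, hEbound]
end
end
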